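/- arXiv:2501.06889 — 7 statements merged into one kernel-verified Lean document; each statement's English description precedes it below -/
import Mathlib

section
/- For every integer a ≥ 7, the polynomial f_a(X) = X³ − aX² − (a+3)X − 1 has three distinct real roots ρ > ρ'' > ρ', and they satisfy a + 1 < ρ < a + 1 + 2/a, −1 − 1/a < ρ' < −1 − 1/(2a), and −1/(a+2) < ρ'' < −1/(a+3). Moreover, if a ≥ 8, then a² < ρ² < 2a², 1 < (ρ')² < 2, and 1/(2a²) < (ρ'')² < 1/a². -/
set_option maxHeartbeats 1000000


theorem stmt_4 :
    ∀ a : ℤ, 7 ≤ a →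
      ∃ ρ ρ' ρ'' : ℝ,
        (ρ ^ 3 - (a : ℝ) * ρ ^ 2 - ((a : ℝ) + 3) * ρ - 1 = 0) ∧
        (ρ' ^ 3 - (a : ℝ) * ρ' ^ 2 - ((a : ℝ) + 3) * ρ' - 1 = 0) ∧
        (ρ'' ^ 3 - (a : ℝ) * ρ'' ^ 2 - ((a : ℝ) + 3) * ρ'' - 1 = 0) ∧
        ρ' < ρ'' ∧ ρ'' < ρ ∧
        (∀ y : ℝ, y ^ 3 - (a : ℝ) * y ^ 2 - ((a : ℝ) + 3) * y - 1 = 0 →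
          y = ρ ∨ y = ρ' ∨ y = ρ'') ∧
        (a : ℝ) + 1 < ρ ∧ ρ < (a : ℝ) + 1 + 2 / a ∧
        -1 - 1 / (a : ℝ) < ρ' ∧ ρ' < -1 - 1 / (2 * (a : ℝ)) ∧
        -(1 / ((a : ℝ) + 2)) < ρ'' ∧ ρ'' < -(1 / ((a : ℝ) + 3)) ∧
        (8 ≤ a →
          (a : ℝ) ^ 2 < ρ ^ 2 ∧ ρ ^ 2 < 2 * (a : ℝ) ^ 2 ∧
          1 < ρ' ^ 2 ∧ ρ' ^ 2 < 2 ∧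
          1 / (2 * (a : ℝ) ^ 2) < ρ'' ^ 2 ∧ ρ'' ^ 2 < 1 / (a : ℝ) ^ 2) := by
  intro a ha
  have hb7 : (7 : ℝ) ≤ (a : ℝ) := by exact_mod_cast ha
  set b : ℝ := (a : ℝ) with hbdef
  have hb0 : (0 : ℝ) < b := by linarith
  set f : ℝ → ℝ := fun y => y ^ 3 - b * y ^ 2 - (b + 3) * y - 1 with hf
  have hfe : ∀ y : ℝ, f y = y ^ 3 - b * y ^ 2 - (b + 3) * y - 1 := fun y => rfl
  have hc : Continuous f := by
    simp only [hf]; continuity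
  have ivt : ∀ lo hi : ℝ, lo ≤ hi → f lo < 0 → 0 < f hi →
      ∃ x, x ∈ Set.Ioo lo hi ∧ f x = 0 := by
    intro lo hi hle h1 h2
    obtain ⟨x, hx, hfx⟩ := intermediate_value_Ioo hle hc.continuousOn ⟨h1, h2⟩
    exact ⟨x, hx, hfx⟩
  have ivt' : ∀ lo hi : ℝ, lo ≤ hi → 0 < f lo → f hi < 0 →
      ∃ x, x ∈ Set.Ioo lo hi ∧ f x = 0 := by
    intro lo hi hle h1 h2
    obtain ⟨x, hx, hfx⟩ := intermediate_value_Ioo' hle hc.continuousOn ⟨h2, h1⟩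
    exact ⟨x, hx, hfx⟩
  -- root ρ in (b+1, b+1+2/b)
  have hfl1 : f (b + 1) < 0 := by rw [hfe]; nlinarith
  have hfr1 : 0 < f (b + 1 + 2 / b) := by
    have key : f (b + 1 + 2 / b) * b ^ 3 = 3 * b ^ 3 + 8 * b ^ 2 + 12 * b + 8 := by
      rw [hfe]; field_simp; ring
    nlinarith [pow_pos hb0 3]
  obtain ⟨ρ, ⟨hρ1, hρ2⟩, hρ0⟩ := ivt (b + 1) (b + 1 + 2 / b) (le_add_of_nonneg_right (by positivity)) hfl1 hfr1
  -- root ρ' in (-1 - 1/b, -1 - 1/(2b))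
  have hfl2 : f (-1 - 1 / b) < 0 := by
    have key : f (-1 - 1 / b) * b ^ 3 = -(b ^ 2) - 3 * b - 1 := by
      rw [hfe]; field_simp; ring
    nlinarith [pow_pos hb0 3]
  have hfr2 : 0 < f (-1 - 1 / (2 * b)) := by
    have key : f (-1 - 1 / (2 * b)) * (8 * b ^ 3) = 4 * b ^ 3 - 2 * b ^ 2 - 6 * b - 1 := by
      rw [hfe]; field_simp; ring
    nlinarith [pow_pos hb0 3]
  have hord : -1 - 1 / b ≤ -1 - 1 / (2 * b) := by
    have h1 : 1 / (2 * b) ≤ 1 / b := by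
      apply div_le_div_of_nonneg_left (by norm_num) hb0 (by linarith)
    linarith
  obtain ⟨ρ', ⟨hρ'1, hρ'2⟩, hρ'0⟩ := ivt (-1 - 1 / b) (-1 - 1 / (2 * b)) hord hfl2 hfr2
  -- root ρ'' in (-1/(b+2), -1/(b+3))
  have hb2 : (0 : ℝ) < b + 2 := by linarith
  have hb3 : (0 : ℝ) < b + 3 := by linarith
  have hfl3 : 0 < f (-(1 / (b + 2))) := by
    have key : f (-(1 / (b + 2))) * (b + 2) ^ 3 = 2 * b + 3 := by
      rw [hfe]; field_simp; ring
    nlinarith [pow_pos hb2 3]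
  have hfr3 : f (-(1 / (b + 3))) < 0 := by
    have key : f (-(1 / (b + 3))) * (b + 3) ^ 3 = -(b ^ 2) - 3 * b - 1 := by
      rw [hfe]; field_simp; ring
    nlinarith [pow_pos hb3 3]
  have hord3 : -(1 / (b + 2)) ≤ -(1 / (b + 3)) := by
    have h1 : 1 / (b + 3) ≤ 1 / (b + 2) := by
      apply div_le_div_of_nonneg_left (by norm_num) hb2 (by linarith)
    linarith
  obtain ⟨ρ'', ⟨hρ''1, hρ''2⟩, hρ''0⟩ := ivt' (-(1 / (b + 2))) (-(1 / (b + 3))) hord3 hfl3 hfr3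
  -- ordering
  have h2bpos : (0 : ℝ) < 1 / (2 * b) := by positivity
  have hfrac2 : (1 : ℝ) / (b + 2) < 1 := by
    rw [div_lt_one hb2]; linarith
  have hfrac3 : (0 : ℝ) < 1 / (b + 3) := by positivity
  have hlt1 : ρ' < ρ'' := by
    have : ρ' < -1 := by linarith
    have : -(1 / (b + 2)) > -1 := by linarith
    linarith
  have hlt2 : ρ'' < ρ := by
    have : ρ'' < 0 := by linarith
    linarith
  refine ⟨ρ, ρ', ρ'', by rw [hfe] at hρ0; exact hρ0, by rw [hfe] at hρ'0; exact hρ'0,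
    by rw [hfe] at hρ''0; exact hρ''0, hlt1, hlt2, ?_, hρ1, hρ2, hρ'1, hρ'2, hρ''1, hρ''2, ?_⟩
  · -- uniqueness
    intro y hy
    by_contra hcon
    push_neg at hcon
    obtain ⟨hy1, hy2, hy3⟩ := hcon
    rw [hfe] at hρ0 hρ'0 hρ''0
    have q : ∀ z : ℝ, z ^ 3 - b * z ^ 2 - (b + 3) * z - 1 = 0 → z ≠ ρ →
        z ^ 2 + z * ρ + ρ ^ 2 - b * z - b * ρ - (b + 3) = 0 := by
      intro z hz hne
      have h : (z - ρ) * (z ^ 2 + z * ρ + ρ ^ 2 - b * z - b * ρ - (b + 3)) = 0 := by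
        linear_combination hz - hρ0
      rcases mul_eq_zero.1 h with h | h
      · exact absurd (sub_eq_zero.1 h) hne
      · exact h
    have qy := q y hy hy1
    have qρ' := q ρ' hρ'0 (ne_of_lt (lt_trans hlt1 hlt2))
    have qρ'' := q ρ'' hρ''0 (ne_of_lt hlt2)
    have h4 : (y - ρ') * (y + ρ' + ρ - b) = 0 := by linear_combination qy - qρ'
    have h5 : (ρ'' - ρ') * (ρ'' + ρ' + ρ - b) = 0 := by linear_combination qρ'' - qρ'
    have h6 : y + ρ' + ρ - b = 0 := by
      rcases mul_eq_zero.1 h4 with h | h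
      · exact absurd (sub_eq_zero.1 h) hy2
      · exact h
    have h7 : ρ'' + ρ' + ρ - b = 0 := by
      rcases mul_eq_zero.1 h5 with h | h
      · exact absurd (sub_eq_zero.1 h) (ne_of_gt hlt1)
      · exact h
    exact hy3 (by linarith)
  · -- squared bounds for a ≥ 8
    intro ha8
    have hb8 : (8 : ℝ) ≤ b := by rw [hbdef]; exact_mod_cast ha8
    have h2b : 2 / b ≤ (1 : ℝ) / 4 := by
      rw [div_le_div_iff₀ hb0 (by norm_num)]; linarith
    constructor
    · nlinarith
    constructor
    · nlinarith
    constructor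
    · nlinarith
    constructor
    · have h1b : 1 / b ≤ (1 : ℝ) / 8 := by
        rw [div_le_div_iff₀ hb0 (by norm_num)]; linarith
      nlinarith
    constructor
    · -- 1/(2b^2) < ρ''^2
      have hv : (0 : ℝ) < 1 / (b + 3) := hfrac3
      have h1 : (1 / (b + 3)) ^ 2 < ρ'' ^ 2 := by nlinarith
      have h2 : 1 / (2 * b ^ 2) < (1 / (b + 3)) ^ 2 := by
        rw [div_pow, one_pow]
        apply div_lt_div_of_pos_left (by norm_num) (by positivity)
        nlinarith
      linarith
    · -- ρ''^2 < 1/b^2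
      have hu : (0 : ℝ) < 1 / (b + 2) := by positivity
      have h1 : ρ'' ^ 2 < (1 / (b + 2)) ^ 2 := by nlinarith
      have h2 : (1 / (b + 2)) ^ 2 < 1 / b ^ 2 := by
        rw [div_pow, one_pow]
        apply div_lt_div_of_pos_left (by norm_num) (by positivity)
        nlinarith
      linarith
end

section
/- There exists a constant C > 0 such that for every integer a ≥ 8 and every real number x ≥ 1, the number of pairs of integers (m, o) with m ≥ 1, o ≥ 1 and Nm(m + o·ρ²) ≤ x is at most C·(x/a²)^(2/3). -/
open NumberField

/-- The largest real root of `X³ - aX² - (a+3)X - 1` (for `a ≥ 7` this set of real roots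
is nonempty and bounded above, so `sSup` picks out the largest root). -/
noncomputable def simplestCubicRoot (a : ℤ) : ℝ :=
  sSup {x : ℝ | x ^ 3 - (a : ℝ) * x ^ 2 - ((a : ℝ) + 3) * x - 1 = 0}

lemma scr_root {a : ℤ} (ha : 8 ≤ a) :
    (simplestCubicRoot a) ^ 3 - (a : ℝ) * (simplestCubicRoot a) ^ 2
      - ((a : ℝ) + 3) * (simplestCubicRoot a) - 1 = 0 := by
  have haR : (8 : ℝ) ≤ (a : ℝ) := by exact_mod_cast ha
  have hfin : {x : ℝ | x ^ 3 - (a : ℝ) * x ^ 2 - ((a : ℝ) + 3) * x - 1 = 0}.Finite := by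
    have hset : {x : ℝ | x ^ 3 - (a : ℝ) * x ^ 2 - ((a : ℝ) + 3) * x - 1 = 0}
        = {x : ℝ | Polynomial.IsRoot (Polynomial.X ^ 3 - Polynomial.C (a : ℝ) * Polynomial.X ^ 2
            - Polynomial.C ((a : ℝ) + 3) * Polynomial.X - Polynomial.C 1) x} := by
      ext t; simp [Polynomial.IsRoot]
    rw [hset]
    apply Polynomial.finite_setOf_isRoot
    intro h
    have h0 := congrArg (Polynomial.eval 0) h
    simp at h0
  have hne : {x : ℝ | x ^ 3 - (a : ℝ) * x ^ 2 - ((a : ℝ) + 3) * x - 1 = 0}.Nonempty := by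
    have hcont : ContinuousOn (fun t : ℝ => t ^ 3 - (a : ℝ) * t ^ 2 - ((a : ℝ) + 3) * t - 1)
        (Set.Icc ((a : ℝ) + 1) ((a : ℝ) + 2)) := by fun_prop
    have hiv := intermediate_value_Icc (by linarith : (a : ℝ) + 1 ≤ (a : ℝ) + 2) hcont
    have h0 : (0 : ℝ) ∈ Set.Icc ((fun t : ℝ => t ^ 3 - (a : ℝ) * t ^ 2 - ((a : ℝ) + 3) * t - 1) ((a : ℝ) + 1))
        ((fun t : ℝ => t ^ 3 - (a : ℝ) * t ^ 2 - ((a : ℝ) + 3) * t - 1) ((a : ℝ) + 2)) := by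
      constructor <;> simp only [] <;> nlinarith
    obtain ⟨t, _, ht⟩ := hiv h0
    exact ⟨t, ht⟩
  have := hne.csSup_mem hfin
  simpa [simplestCubicRoot] using this

lemma no_rat_root {a : ℤ} (ha : 8 ≤ a) (q : ℚ) :
    q ^ 3 - (a : ℚ) * q ^ 2 - ((a : ℚ) + 3) * q - 1 ≠ 0 := by
  intro h
  have hd0 : (0 : ℤ) < (q.den : ℤ) := by exact_mod_cast q.pos
  have hdQ : ((q.den : ℚ)) ≠ 0 := by exact_mod_cast q.den_nz
  have hnum : (q.num : ℚ) = q * (q.den : ℚ) := by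
    rw [eq_comm, ← eq_div_iff hdQ]; exact (Rat.num_div_den q).symm
  have key : (q.num : ℚ) ^ 3 - (a : ℚ) * q.num ^ 2 * q.den - ((a : ℚ) + 3) * q.num * q.den ^ 2
      - (q.den : ℚ) ^ 3 = 0 := by
    have heq : (q.num : ℚ) ^ 3 - (a : ℚ) * q.num ^ 2 * q.den - ((a : ℚ) + 3) * q.num * q.den ^ 2
        - (q.den : ℚ) ^ 3
        = (q ^ 3 - (a : ℚ) * q ^ 2 - ((a : ℚ) + 3) * q - 1) * (q.den : ℚ) ^ 3 := by
      rw [hnum]; ring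
    rw [heq, h, zero_mul]
  have keyZ : q.num ^ 3 - a * q.num ^ 2 * q.den - (a + 3) * q.num * (q.den : ℤ) ^ 2
      - (q.den : ℤ) ^ 3 = 0 := by exact_mod_cast key
  have hdvd : (q.den : ℤ) ∣ q.num ^ 3 :=
    ⟨a * q.num ^ 2 + (a + 3) * q.num * q.den + (q.den : ℤ) ^ 2, by linear_combination keyZ⟩
  have hcop : IsCoprime (q.den : ℤ) q.num := by
    rw [Int.isCoprime_iff_gcd_eq_one]
    simpa [Int.gcd, Nat.coprime_comm] using q.reduced.symm
  have hd1 : (q.den : ℤ) = 1 := by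
    obtain ⟨u, v, huv⟩ := hcop.pow_right (n := 3)
    have h1 : (q.den : ℤ) ∣ 1 := by
      rw [← huv]
      exact dvd_add (dvd_mul_left _ _) (hdvd.mul_left v)
    rcases Int.isUnit_iff.mp (isUnit_of_dvd_one h1) with h' | h' <;> omega
  rw [hd1] at keyZ
  have hn : q.num ∣ 1 := ⟨q.num ^ 2 - a * q.num - (a + 3), by linear_combination -keyZ⟩
  rcases Int.isUnit_iff.mp (isUnit_of_dvd_one hn) with h' | h' <;> rw [h'] at keyZ <;>
    simp at keyZ <;> omega

lemma norm_formula {a : ℤ} (ha : 8 ≤ a) (K : Type) [Field K] [NumberField K]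
    (σ : K →+* ℝ) (ρK : K) (hσ : σ ρK = simplestCubicRoot a)
    (htop : IntermediateField.adjoin ℚ {ρK} = ⊤) (m o : ℤ) :
    (Algebra.norm ℚ ((m : K) + (o : K) * ρK ^ 2) : ℚ)
      = ((m ^ 3 + o ^ 3 + (a ^ 2 + 2 * a + 6) * m ^ 2 * o
          + (a ^ 2 + 4 * a + 9) * m * o ^ 2 : ℤ) : ℚ) := by
  have hK : ρK ^ 3 = (a : K) * ρK ^ 2 + ((a : K) + 3) * ρK + 1 := by
    have h1 : σ (ρK ^ 3 - (a : K) * ρK ^ 2 - ((a : K) + 3) * ρK - 1) = 0 := by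
      simp only [map_sub, map_mul, map_add, map_pow, map_one, map_intCast, map_ofNat, hσ]
      linear_combination scr_root ha
    have h2 : ρK ^ 3 - (a : K) * ρK ^ 2 - ((a : K) + 3) * ρK - 1 = 0 :=
      σ.injective (by rw [h1, map_zero])
    linear_combination h2
  set f : Polynomial ℚ := Polynomial.X ^ 3 - Polynomial.C (a : ℚ) * Polynomial.X ^ 2
    - Polynomial.C ((a : ℚ) + 3) * Polynomial.X - Polynomial.C 1 with hf
  have hfeq : f = Polynomial.X ^ 3 - (Polynomial.C (a : ℚ) * Polynomial.X ^ 2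
      + Polynomial.C ((a : ℚ) + 3) * Polynomial.X + Polynomial.C 1) := by rw [hf]; ring
  have hmon : f.Monic := by
    rw [hfeq]; exact Polynomial.monic_X_pow_sub Polynomial.degree_quadratic_lt
  have hdeg : f.natDegree = 3 := by
    have h3 : f = Polynomial.C 1 * Polynomial.X ^ 3 + Polynomial.C (-(a : ℚ)) * Polynomial.X ^ 2
        + Polynomial.C (-((a : ℚ) + 3)) * Polynomial.X + Polynomial.C (-1) := by
      rw [hf]; simp only [map_neg, map_one]; ring
    rw [h3, Polynomial.natDegree_cubic (by norm_num)]
  have haev : Polynomial.aeval ρK f = 0 := by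
    rw [hf]
    simp only [map_sub, map_mul, map_pow, Polynomial.aeval_X, Polynomial.aeval_C, map_one,
      map_add, map_intCast, map_ofNat]
    linear_combination hK
  have hirr : Irreducible f := by
    rw [Polynomial.irreducible_iff_roots_eq_zero_of_degree_le_three (by rw [hdeg]; omega) (by rw [hdeg])]
    by_contra hne
    obtain ⟨r, hr⟩ := Multiset.exists_mem_of_ne_zero hne
    have hf0 : f ≠ 0 := hmon.ne_zero
    have hroot : Polynomial.IsRoot f r := (Polynomial.mem_roots hf0).mp hr
    have heval : r ^ 3 - (a : ℚ) * r ^ 2 - ((a : ℚ) + 3) * r - 1 = 0 := by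
      simpa [hf, Polynomial.IsRoot] using hroot
    exact no_rat_root ha r heval
  have hmin : minpoly ℚ ρK = f := (minpoly.eq_of_irreducible_of_monic hirr haev hmon).symm
  have hint : IsIntegral ℚ ρK := ⟨f, hmon, by rwa [Polynomial.aeval_def] at haev⟩
  let e : (IntermediateField.adjoin ℚ {ρK}) ≃ₐ[ℚ] K :=
    (IntermediateField.equivOfEq htop).trans IntermediateField.topEquiv
  let pb := (IntermediateField.adjoin.powerBasis hint).map e
  have hgen : pb.gen = ρK := by
    simp [pb, e, PowerBasis.map_gen, IntermediateField.adjoin.powerBasis_gen]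
  have hdim : pb.dim = 3 := by
    change (IntermediateField.adjoin.powerBasis hint).dim = 3
    simp [pb, PowerBasis.map_dim, IntermediateField.adjoin.powerBasis_dim, hmin, hdeg]
  let B : Module.Basis (Fin 3) ℚ K := pb.basis.reindex (finCongr hdim)
  have hB : ∀ i : Fin 3, B i = ρK ^ (i : ℕ) := by
    intro i
    rw [Module.Basis.reindex_apply, PowerBasis.basis_eq_pow, hgen]
    congr 1
  have hrep : ∀ (c : Fin 3 → ℚ) (z : K),
      z = (c 0) • (1 : K) + (c 1) • ρK + (c 2) • ρK ^ 2 → ∀ i, B.repr z i = c i := by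
    intro c z hz i
    have h1 : z = ∑ j, c j • B j := by
      rw [Fin.sum_univ_three, hB 0, hB 1, hB 2]
      simpa using hz
    rw [h1, B.repr_sum_self]
  set y : K := (m : K) + (o : K) * ρK ^ 2 with hy
  have ent : ∀ (j : Fin 3) (c : Fin 3 → ℚ), y * B j = c 0 • (1 : K) + c 1 • ρK + c 2 • ρK ^ 2 →
      ∀ i, Algebra.leftMulMatrix B y i j = c i := by
    intro j c hc i
    rw [Algebra.leftMulMatrix_eq_repr_mul]
    exact hrep c _ hc i
  have hc0 := ent 0 ![(m : ℚ), 0, (o : ℚ)] (by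
    rw [hB]
    simp only [Matrix.cons_val_zero, Matrix.cons_val_one, Matrix.head_cons, Matrix.cons_val_two,
      Matrix.tail_cons, Fin.val_zero, pow_zero, Rat.smul_def, hy]
    push_cast
    ring)
  have hc1 := ent 1 ![(o : ℚ), (m : ℚ) + (o : ℚ) * ((a : ℚ) + 3), (o : ℚ) * (a : ℚ)] (by
    rw [hB]
    simp only [Matrix.cons_val_zero, Matrix.cons_val_one, Matrix.head_cons, Matrix.cons_val_two,
      Matrix.tail_cons, Fin.val_one, pow_one, Rat.smul_def, hy]
    push_cast
    linear_combination (o : K) * hK)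
  have hc2 := ent 2 ![(o : ℚ) * (a : ℚ), (o : ℚ) * ((a : ℚ) ^ 2 + 3 * (a : ℚ) + 1),
      (m : ℚ) + (o : ℚ) * ((a : ℚ) ^ 2 + (a : ℚ) + 3)] (by
    rw [hB]
    simp only [Matrix.cons_val_zero, Matrix.cons_val_one, Matrix.head_cons, Matrix.cons_val_two,
      Matrix.tail_cons, Fin.val_two, Rat.smul_def, hy]
    push_cast
    linear_combination ((o : K) * (ρK + (a : K))) * hK)
  rw [Algebra.norm_eq_matrix_det B y, Matrix.det_fin_three, hc0 0, hc0 1, hc0 2, hc1 0, hc1 1,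
    hc1 2, hc2 0, hc2 1, hc2 2]
  simp only [Matrix.cons_val_zero, Matrix.cons_val_one, Matrix.head_cons, Matrix.cons_val_two,
    Matrix.tail_cons]
  push_cast
  ring

lemma sum_inv_sqrt (n : ℕ) :
    ∑ k ∈ Finset.Icc 1 n, (1 / Real.sqrt k) ≤ 2 * Real.sqrt n := by
  induction n with
  | zero => simp
  | succ n ih =>
    rw [Finset.sum_Icc_succ_top (by omega)]
    have h1 : (0 : ℝ) < Real.sqrt (n + 1) := by positivity
    have h2 : Real.sqrt (n : ℝ) ≤ Real.sqrt ((n : ℝ) + 1) := Real.sqrt_le_sqrt (by linarith)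
    have h3 : Real.sqrt ((n : ℝ) + 1) ^ 2 = (n : ℝ) + 1 := Real.sq_sqrt (by positivity)
    have h4 : Real.sqrt (n : ℝ) ^ 2 = (n : ℝ) := Real.sq_sqrt (by positivity)
    have key : 1 / Real.sqrt ((n : ℕ) + 1 : ℕ) ≤ 2 * Real.sqrt ((n : ℝ) + 1) - 2 * Real.sqrt n := by
      push_cast
      rw [div_le_iff₀ (by positivity)]
      nlinarith [sq_nonneg (Real.sqrt ((n : ℝ) + 1) - Real.sqrt n)]
    push_cast at ih key ⊢
    linarith

lemma int_Icc_map (M : ℤ) :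
    Finset.Icc (1 : ℤ) M = (Finset.Icc 1 M.toNat).map ⟨Nat.cast, Nat.cast_injective⟩ := by
  ext x
  simp only [Finset.mem_Icc, Finset.mem_map, Function.Embedding.coeFn_mk]
  constructor
  · intro ⟨h1, h2⟩
    exact ⟨x.toNat, ⟨by omega, by omega⟩, by omega⟩
  · rintro ⟨k, hk, rfl⟩
    omega

theorem stmt_6 :
    ∃ C : ℝ, 0 < C ∧
      ∀ (a : ℤ), 8 ≤ a →
      ∀ (K : Type) [Field K] [NumberField K] (σ : K →+* ℝ) (ρK : K),
        σ ρK = simplestCubicRoot a →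
        IntermediateField.adjoin ℚ {ρK} = ⊤ →
        ∀ x : ℝ, 1 ≤ x →
          (Set.ncard {p : ℤ × ℤ | 1 ≤ p.1 ∧ 1 ≤ p.2 ∧
              ((Algebra.norm ℚ ((p.1 : K) + (p.2 : K) * ρK ^ 2) : ℚ) : ℝ) ≤ x} : ℝ) ≤
            C * (x / (a : ℝ) ^ 2) ^ ((2 : ℝ) / 3) := by
  refine ⟨4, by norm_num, ?_⟩
  intro a ha K _ _ σ ρK hσ htop x hx
  have ha2 : (0 : ℝ) < (a : ℝ) ^ 2 := by
    have : (8 : ℝ) ≤ (a : ℝ) := by exact_mod_cast ha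
    positivity
  set T : ℝ := x / (a : ℝ) ^ 2 with hT
  have hT0 : 0 < T := div_pos (by linarith) ha2
  set S : Set (ℤ × ℤ) := {p : ℤ × ℤ | 1 ≤ p.1 ∧ 1 ≤ p.2 ∧
      ((Algebra.norm ℚ ((p.1 : K) + (p.2 : K) * ρK ^ 2) : ℚ) : ℝ) ≤ x} with hSdef
  have hmem : ∀ p : ℤ × ℤ, p ∈ S → 1 ≤ p.1 ∧ 1 ≤ p.2 ∧
      ((p.1 * p.2 * max p.1 p.2 : ℤ) : ℝ) ≤ T := by
    rintro ⟨m, o⟩ ⟨hm', ho', hN⟩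
    have hm : (1:ℤ) ≤ m := hm'
    have ho : (1:ℤ) ≤ o := ho'
    refine ⟨hm, ho, ?_⟩
    rw [norm_formula ha K σ ρK hσ htop m o] at hN
    have hNR : ((m : ℝ) ^ 3 + (o : ℝ) ^ 3 + ((a : ℝ) ^ 2 + 2 * a + 6) * m ^ 2 * o
        + ((a : ℝ) ^ 2 + 4 * a + 9) * m * o ^ 2) ≤ x := by
      push_cast at hN
      convert hN using 2 <;> push_cast <;> ring
    have hZ : (a ^ 2 : ℤ) * (m * o * max m o) ≤ m ^ 3 + o ^ 3 + (a ^ 2 + 2 * a + 6) * m ^ 2 * o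
        + (a ^ 2 + 4 * a + 9) * m * o ^ 2 := by
      rcases le_total m o with h | h
      · rw [max_eq_right h]
        nlinarith [mul_nonneg (mul_nonneg (by linarith : (0:ℤ) ≤ m) (by linarith : (0:ℤ) ≤ o)) (by linarith : (0:ℤ) ≤ o),
          mul_nonneg (mul_nonneg (by linarith : (0:ℤ) ≤ m) (by linarith : (0:ℤ) ≤ m)) (by linarith : (0:ℤ) ≤ o),
          pow_nonneg (by linarith : (0:ℤ) ≤ m) 3, pow_nonneg (by linarith : (0:ℤ) ≤ o) 3,
          mul_nonneg (mul_nonneg (sq_nonneg m) (by linarith : (0:ℤ) ≤ o)) (by linarith : (0:ℤ) ≤ a)]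
      · rw [max_eq_left h]
        nlinarith [mul_nonneg (mul_nonneg (by linarith : (0:ℤ) ≤ m) (by linarith : (0:ℤ) ≤ o)) (by linarith : (0:ℤ) ≤ o),
          mul_nonneg (mul_nonneg (by linarith : (0:ℤ) ≤ m) (by linarith : (0:ℤ) ≤ m)) (by linarith : (0:ℤ) ≤ o),
          pow_nonneg (by linarith : (0:ℤ) ≤ m) 3, pow_nonneg (by linarith : (0:ℤ) ≤ o) 3,
          mul_nonneg (mul_nonneg (sq_nonneg m) (by linarith : (0:ℤ) ≤ o)) (by linarith : (0:ℤ) ≤ a),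
          mul_nonneg (mul_nonneg (by linarith : (0:ℤ) ≤ m) (sq_nonneg o)) (by linarith : (0:ℤ) ≤ a)]
    have hZR : (a : ℝ) ^ 2 * ((m * o * max m o : ℤ) : ℝ) ≤ x := by
      have : (((a ^ 2 : ℤ) * (m * o * max m o) : ℤ) : ℝ)
          ≤ ((m ^ 3 + o ^ 3 + (a ^ 2 + 2 * a + 6) * m ^ 2 * o
            + (a ^ 2 + 4 * a + 9) * m * o ^ 2 : ℤ) : ℝ) := by exact_mod_cast hZ
      push_cast at this ⊢
      push_cast at hNR
      nlinarith [this, hNR]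
    rw [hT, le_div_iff₀ ha2]
    linarith [hZR]
  by_cases hT1 : T < 1
  · have hSempty : S = ∅ := by
      ext p
      simp only [Set.mem_empty_iff_false, iff_false]
      intro hp
      obtain ⟨hm, ho, hb⟩ := hmem p hp
      have h1 : (1 : ℤ) ≤ p.1 * p.2 * max p.1 p.2 := by
        have h2 : (1:ℤ) ≤ p.1 * p.2 := by nlinarith
        have hmax : (1:ℤ) ≤ max p.1 p.2 := le_trans hm (le_max_left p.1 p.2)
        nlinarith
      have h1R : (1 : ℝ) ≤ ((p.1 * p.2 * max p.1 p.2 : ℤ) : ℝ) := by exact_mod_cast h1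
      linarith
    rw [hSempty]
    simp only [Set.ncard_empty, Nat.cast_zero]
    positivity
  push_neg at hT1
  set Mz : ℤ := ⌊T ^ ((1 : ℝ) / 3)⌋ with hMz
  set Kz : ℤ → ℤ := fun m => ⌊Real.sqrt (T / (m : ℝ))⌋ with hKz
  set F1 := (Finset.Icc 1 Mz).biUnion
    (fun m => ({m} : Finset ℤ) ×ˢ Finset.Icc 1 (Kz m)) with hF1
  set F2 := (Finset.Icc 1 Mz).biUnion
    (fun o => Finset.Icc 1 (Kz o) ×ˢ ({o} : Finset ℤ)) with hF2
  have hT13 : (1 : ℝ) ≤ T ^ ((1 : ℝ) / 3) := by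
    have := Real.rpow_le_rpow (by norm_num : (0:ℝ) ≤ 1) hT1 (by norm_num : (0:ℝ) ≤ 1/3)
    rwa [Real.one_rpow] at this
  have hcube : ∀ m : ℤ, 1 ≤ m → (m : ℝ) ^ 3 ≤ T → m ≤ Mz := by
    intro m hm h3
    rw [hMz]
    apply Int.le_floor.mpr
    have hm0 : (0 : ℝ) ≤ (m : ℝ) := by exact_mod_cast (by omega : (0:ℤ) ≤ m)
    have hr : ((m : ℝ) ^ 3) ^ ((1:ℝ)/3) ≤ T ^ ((1:ℝ)/3) :=
      Real.rpow_le_rpow (by positivity) h3 (by norm_num)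
    calc (m : ℝ) = ((m : ℝ) ^ 3) ^ ((1:ℝ)/3) := by
          rw [← Real.rpow_natCast (m : ℝ) 3, ← Real.rpow_mul hm0]
          norm_num
      _ ≤ T ^ ((1:ℝ)/3) := hr
  have hsq : ∀ m o : ℤ, 1 ≤ m → 0 ≤ o → (m : ℝ) * (o : ℝ) ^ 2 ≤ T → o ≤ Kz m := by
    intro m o hm ho h2
    rw [hKz]
    apply Int.le_floor.mpr
    have hmR : (0 : ℝ) < (m : ℝ) := by exact_mod_cast (by omega : (0:ℤ) < m)
    rw [Real.le_sqrt (by exact_mod_cast ho) (by positivity)]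
    rw [le_div_iff₀ hmR]
    nlinarith
  have hsub : S ⊆ ↑(F1 ∪ F2) := by
    rintro ⟨m, o⟩ hp
    obtain ⟨hm', ho', hb'⟩ := hmem _ hp
    have hm : (1:ℤ) ≤ m := hm'
    have ho : (1:ℤ) ≤ o := ho'
    have hb : ((m * o * max m o : ℤ) : ℝ) ≤ T := hb'
    simp only [Finset.coe_union, Set.mem_union, Finset.mem_coe, hF1, hF2, Finset.mem_biUnion,
      Finset.mem_product, Finset.mem_singleton, Finset.mem_Icc]
    rcases le_total m o with h | h
    · left
      refine ⟨m, ⟨hm, ?_⟩, ⟨rfl, ho, ?_⟩⟩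
      · apply hcube m hm
        have hZ : (m ^ 3 : ℤ) ≤ m * o * max m o := by
          rw [max_eq_right h]
          nlinarith [mul_le_mul_of_nonneg_left h (by linarith : (0:ℤ) ≤ m),
            mul_nonneg (by linarith : (0:ℤ) ≤ m) (by linarith : (0:ℤ) ≤ o)]
        have : ((m ^ 3 : ℤ) : ℝ) ≤ ((m * o * max m o : ℤ) : ℝ) := by exact_mod_cast hZ
        push_cast at this
        calc ((m : ℝ)) ^ 3 ≤ _ := this
          _ ≤ T := by exact_mod_cast hb
      · apply hsq m o hm (by omega)
        have hZ : (m * o ^ 2 : ℤ) = m * o * max m o := by rw [max_eq_right h]; ring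
        have : ((m * o ^ 2 : ℤ) : ℝ) ≤ T := by rw [hZ]; exact_mod_cast hb
        push_cast at this
        linarith
    · right
      refine ⟨o, ⟨ho, ?_⟩, ⟨?_, rfl⟩⟩
      · apply hcube o ho
        have hZ : (o ^ 3 : ℤ) ≤ m * o * max m o := by
          rw [max_eq_left h]
          nlinarith [mul_le_mul_of_nonneg_left h (by linarith : (0:ℤ) ≤ o),
            mul_nonneg (by linarith : (0:ℤ) ≤ m) (by linarith : (0:ℤ) ≤ o)]
        have : ((o ^ 3 : ℤ) : ℝ) ≤ ((m * o * max m o : ℤ) : ℝ) := by exact_mod_cast hZ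
        push_cast at this
        calc ((o : ℝ)) ^ 3 ≤ _ := this
          _ ≤ T := by exact_mod_cast hb
      · refine ⟨?_, ?_⟩
        · exact hm
        · apply hsq o m ho (by omega)
          have hZ : (o * m ^ 2 : ℤ) = m * o * max m o := by rw [max_eq_left h]; ring
          have : ((o * m ^ 2 : ℤ) : ℝ) ≤ T := by rw [hZ]; exact_mod_cast hb
          push_cast at this
          linarith
  -- cardinality bounds
  have hMz1 : (1 : ℤ) ≤ Mz := by
    rw [hMz]
    exact Int.le_floor.mpr (by exact_mod_cast hT13)
  have hKzcast : ∀ m : ℤ, 1 ≤ m → (((Kz m).toNat : ℝ)) ≤ Real.sqrt T * (1 / Real.sqrt (m : ℝ)) := by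
    intro m hm
    have h0 : (0 : ℤ) ≤ Kz m := by
      rw [hKz]
      exact Int.floor_nonneg.mpr (Real.sqrt_nonneg _)
    have h1 : (((Kz m).toNat : ℤ) : ℝ) ≤ Real.sqrt (T / (m : ℝ)) := by
      rw [Int.toNat_of_nonneg h0, hKz]
      exact Int.floor_le _
    have h2 : Real.sqrt (T / (m : ℝ)) = Real.sqrt T * (1 / Real.sqrt (m : ℝ)) := by
      rw [Real.sqrt_div hT0.le, div_eq_mul_one_div]
    rw [← h2]
    exact_mod_cast h1
  have hsumR : ((∑ m ∈ Finset.Icc (1 : ℤ) Mz, (Kz m).toNat : ℕ) : ℝ) ≤ 2 * T ^ ((2:ℝ)/3) := by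
    rw [Nat.cast_sum]
    have step1 : ∑ m ∈ Finset.Icc (1 : ℤ) Mz, (((Kz m).toNat : ℝ))
        ≤ ∑ m ∈ Finset.Icc (1 : ℤ) Mz, Real.sqrt T * (1 / Real.sqrt (m : ℝ)) := by
      apply Finset.sum_le_sum
      intro m hm'
      rw [Finset.mem_Icc] at hm'
      exact hKzcast m hm'.1
    have step2 : ∑ m ∈ Finset.Icc (1 : ℤ) Mz, Real.sqrt T * (1 / Real.sqrt (m : ℝ))
        = Real.sqrt T * ∑ k ∈ Finset.Icc 1 Mz.toNat, (1 / Real.sqrt (k : ℝ)) := by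
      rw [← Finset.mul_sum, int_Icc_map Mz, Finset.sum_map]
      simp
    have step3 : ∑ k ∈ Finset.Icc 1 Mz.toNat, (1 / Real.sqrt (k : ℝ))
        ≤ 2 * Real.sqrt (Mz.toNat : ℝ) := sum_inv_sqrt _
    have step4 : Real.sqrt (Mz.toNat : ℝ) ≤ T ^ ((1:ℝ)/6) := by
      have h1 : ((Mz.toNat : ℕ) : ℝ) ≤ T ^ ((1:ℝ)/3) := by
        have h2 : ((Mz : ℤ) : ℝ) ≤ T ^ ((1:ℝ)/3) := Int.floor_le _
        have h3 : ((Mz.toNat : ℕ) : ℝ) = ((Mz : ℤ) : ℝ) := by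
          have := Int.toNat_of_nonneg (by omega : (0:ℤ) ≤ Mz)
          exact_mod_cast congrArg (Int.cast : ℤ → ℝ) this
        rw [h3]; exact h2
      calc Real.sqrt (Mz.toNat : ℝ) ≤ Real.sqrt (T ^ ((1:ℝ)/3)) := Real.sqrt_le_sqrt h1
        _ = T ^ ((1:ℝ)/6) := by
          rw [Real.sqrt_eq_rpow, ← Real.rpow_mul hT0.le]
          norm_num
    have step5 : Real.sqrt T = T ^ ((1:ℝ)/2) := Real.sqrt_eq_rpow T
    calc ∑ m ∈ Finset.Icc (1 : ℤ) Mz, (((Kz m).toNat : ℝ))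
        ≤ Real.sqrt T * ∑ k ∈ Finset.Icc 1 Mz.toNat, (1 / Real.sqrt (k : ℝ)) := by
          rw [← step2]; exact step1
      _ ≤ Real.sqrt T * (2 * Real.sqrt (Mz.toNat : ℝ)) := by
          apply mul_le_mul_of_nonneg_left step3 (Real.sqrt_nonneg _)
      _ ≤ Real.sqrt T * (2 * T ^ ((1:ℝ)/6)) := by
          apply mul_le_mul_of_nonneg_left _ (Real.sqrt_nonneg _)
          linarith [step4]
      _ = 2 * (T ^ ((1:ℝ)/2) * T ^ ((1:ℝ)/6)) := by rw [step5]; ring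
      _ = 2 * T ^ ((2:ℝ)/3) := by
          rw [← Real.rpow_add hT0]
          norm_num
  have hcard1 : F1.card ≤ ∑ m ∈ Finset.Icc (1 : ℤ) Mz, (Kz m).toNat := by
    refine Finset.card_biUnion_le.trans ?_
    apply Finset.sum_le_sum
    intro m hm'
    rw [Finset.card_product, Finset.card_singleton, one_mul, Int.card_Icc]
    simp
  have hcard2 : F2.card ≤ ∑ m ∈ Finset.Icc (1 : ℤ) Mz, (Kz m).toNat := by
    refine Finset.card_biUnion_le.trans ?_
    apply Finset.sum_le_sum
    intro m hm'
    rw [Finset.card_product, Finset.card_singleton, mul_one, Int.card_Icc]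
    simp
  have hncard : (S.ncard : ℝ) ≤ ((F1 ∪ F2).card : ℝ) := by
    have h1 := Set.ncard_le_ncard hsub (F1 ∪ F2).finite_toSet
    rw [Set.ncard_coe_finset] at h1
    exact_mod_cast h1
  calc (S.ncard : ℝ) ≤ ((F1 ∪ F2).card : ℝ) := hncard
    _ ≤ ((F1.card + F2.card : ℕ) : ℝ) := by exact_mod_cast Finset.card_union_le F1 F2
    _ ≤ ((∑ m ∈ Finset.Icc (1 : ℤ) Mz, (Kz m).toNat : ℕ) : ℝ)
        + ((∑ m ∈ Finset.Icc (1 : ℤ) Mz, (Kz m).toNat : ℕ) : ℝ) := by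
        push_cast
        have c1 : ((F1.card : ℕ) : ℝ) ≤ ((∑ m ∈ Finset.Icc (1 : ℤ) Mz, (Kz m).toNat : ℕ) : ℝ) := by
          exact_mod_cast hcard1
        have c2 : ((F2.card : ℕ) : ℝ) ≤ ((∑ m ∈ Finset.Icc (1 : ℤ) Mz, (Kz m).toNat : ℕ) : ℝ) := by
          exact_mod_cast hcard2
        push_cast at c1 c2
        linarith
    _ ≤ 2 * T ^ ((2:ℝ)/3) + 2 * T ^ ((2:ℝ)/3) := by linarith [hsumR]
    _ = 4 * T ^ ((2:ℝ)/3) := by ring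
end

section
/- Let a ≥ 8 be an integer, let x > 0 be real, and let t₁, t₂, t₃ > 0 be real numbers. Set N(t₁, t₂, t₃) := (t₁ + t₂·ρ² + t₃·(ρ')⁻²)·(t₁ + t₂·(ρ')² + t₃·(ρ'')⁻²)·(t₁ + t₂·(ρ'')² + t₃·ρ⁻²). If N(t₁, t₂, t₃) ≤ x, then t₁³ < x, t₂³ < x, a²·t₁·t₂² < x, a²·t₁²·t₃ < x, a²·t₂·t₃² < 2x, and a⁴·t₁·t₂·t₃ < x. -/
set_option maxHeartbeats 1000000

lemma key_prod (p q r A B C x : ℝ) (hp : 0 < p) (hq : 0 < q) (hr : 0 < r)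
    (h1 : p < A) (h2 : q < B) (h3 : r < C) (h : A * B * C ≤ x) : p * q * r < x := by
  have hA : 0 < A := hp.trans h1
  have hB : 0 < B := hq.trans h2
  calc p * q * r < A * B * C := by
        apply mul_lt_mul' (le_of_lt (mul_lt_mul' h1.le h2 hq.le hA)) h3 hr.le
        positivity
    _ ≤ x := h

theorem stmt_9 (a : ℤ) (ha : 8 ≤ a) (x : ℝ) (hx : 0 < x)
    (ρ ρ' ρ'' : ℝ)
    (hρ : ρ ^ 3 - (a : ℝ) * ρ ^ 2 - ((a : ℝ) + 3) * ρ - 1 = 0)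
    (hρ' : ρ' ^ 3 - (a : ℝ) * ρ' ^ 2 - ((a : ℝ) + 3) * ρ' - 1 = 0)
    (hρ'' : ρ'' ^ 3 - (a : ℝ) * ρ'' ^ 2 - ((a : ℝ) + 3) * ρ'' - 1 = 0)
    (hord₁ : ρ' < ρ'') (hord₂ : ρ'' < ρ)
    (hall : ∀ y : ℝ, y ^ 3 - (a : ℝ) * y ^ 2 - ((a : ℝ) + 3) * y - 1 = 0 →
      y = ρ ∨ y = ρ' ∨ y = ρ'')
    (t₁ t₂ t₃ : ℝ) (ht₁ : 0 < t₁) (ht₂ : 0 < t₂) (ht₃ : 0 < t₃)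
    (hN : (t₁ + t₂ * ρ ^ 2 + t₃ * (ρ')⁻¹ ^ 2) * (t₁ + t₂ * ρ' ^ 2 + t₃ * (ρ'')⁻¹ ^ 2)
        * (t₁ + t₂ * ρ'' ^ 2 + t₃ * ρ⁻¹ ^ 2) ≤ x) :
    t₁ ^ 3 < x ∧ t₂ ^ 3 < x ∧ (a : ℝ) ^ 2 * t₁ * t₂ ^ 2 < x ∧
      (a : ℝ) ^ 2 * t₁ ^ 2 * t₃ < x ∧ (a : ℝ) ^ 2 * t₂ * t₃ ^ 2 < 2 * x ∧
      (a : ℝ) ^ 4 * t₁ * t₂ * t₃ < x := by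
  have ha8 : (8:ℝ) ≤ (a:ℝ) := by exact_mod_cast ha
  set f : ℝ → ℝ := fun y => y ^ 3 - (a : ℝ) * y ^ 2 - ((a : ℝ) + 3) * y - 1 with hf
  have hcont : Continuous f := by fun_prop
  have hf1lo : f ((a:ℝ)+1) < 0 := by simp only [hf]; nlinarith
  have hf1hi : 0 < f ((a:ℝ)+2) := by simp only [hf]; nlinarith
  obtain ⟨r1, hr1mem, hr1⟩ := intermediate_value_Ioo (by linarith : (a:ℝ)+1 ≤ (a:ℝ)+2)
    hcont.continuousOn ⟨hf1lo, hf1hi⟩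
  have hf2lo : f (-2) < 0 := by simp only [hf]; nlinarith
  have hf2hi : 0 < f (-1) := by simp only [hf]; nlinarith
  obtain ⟨r2, hr2mem, hr2⟩ := intermediate_value_Ioo (by norm_num : (-2:ℝ) ≤ -1)
    hcont.continuousOn ⟨hf2lo, hf2hi⟩
  have hapos : (0:ℝ) < (a:ℝ) := by linarith
  have hf3lo : 0 < f (-(1/(a:ℝ))) := by
    simp only [hf]
    have h1 : (-(1/(a:ℝ)))^3 - (a:ℝ) * (-(1/(a:ℝ)))^2 - ((a:ℝ)+3) * (-(1/(a:ℝ))) - 1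
        = (2*(a:ℝ)^2 - 1)/(a:ℝ)^3 := by field_simp; ring
    rw [h1]
    have h64 : (8:ℝ)*8 ≤ (a:ℝ)*(a:ℝ) := mul_le_mul ha8 ha8 (by norm_num) (by linarith)
    have h2 : (0:ℝ) < 2*(a:ℝ)^2 - 1 := by nlinarith [h64]
    exact div_pos h2 (by positivity)
  have hf3hi : f 0 < 0 := by simp only [hf]; norm_num
  obtain ⟨r3, hr3mem, hr3⟩ := intermediate_value_Ioo' (neg_nonpos.mpr (by positivity) :
      -(1/(a:ℝ)) ≤ 0) hcont.continuousOn ⟨hf3hi, hf3lo⟩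
  obtain ⟨hr1a, hr1b⟩ := hr1mem
  obtain ⟨hr2a, hr2b⟩ := hr2mem
  obtain ⟨hr3a, hr3b⟩ := hr3mem
  have hainv : 1/(a:ℝ) ≤ 1 := by rw [div_le_one hapos]; linarith
  -- identify roots
  have H1 := hall r1 hr1
  have H2 := hall r2 hr2
  have H3 := hall r3 hr3
  have hρeq : ρ = r1 ∧ ρ' = r2 ∧ ρ'' = r3 := by
    rcases H1 with h1|h1|h1 <;> rcases H2 with h2|h2|h2 <;> rcases H3 with h3|h3|h3 <;>
      refine ⟨by linarith, by linarith, by linarith⟩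
  obtain ⟨e1, e2, e3⟩ := hρeq
  subst e1; subst e2; subst e3
  -- bounds
  have hρpos : (a:ℝ) + 1 < ρ := hr1a
  have hρ'lt : ρ' < -1 := hr2b
  have hρ''lo : -(1/(a:ℝ)) < ρ'' := hr3a
  have hρ''hi : ρ'' < 0 := hr3b
  have hρne : ρ ≠ 0 := by intro h; rw [h] at hρpos; linarith
  have hρ'ne : ρ' ≠ 0 := by intro h; rw [h] at hρ'lt; linarith
  have hρ''ne : ρ'' ≠ 0 := ne_of_lt hρ''hi
  have hρ0 : (0:ℝ) < ρ := by linarith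
  -- Vieta: product of roots = 1
  have h12 : ρ^2 + ρ*ρ' + ρ'^2 - (a:ℝ)*(ρ+ρ') - ((a:ℝ)+3) = 0 := by
    have hm : (ρ - ρ') * (ρ^2 + ρ*ρ' + ρ'^2 - (a:ℝ)*(ρ+ρ') - ((a:ℝ)+3)) = 0 := by
      linear_combination hρ - hρ'
    rcases mul_eq_zero.mp hm with h | h
    · exfalso; have : ρ ≠ ρ' := by intro h'; linarith
      exact this (by linarith [sub_eq_zero.mp h])
    · exact h
  have h13 : ρ^2 + ρ*ρ'' + ρ''^2 - (a:ℝ)*(ρ+ρ'') - ((a:ℝ)+3) = 0 := by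
    have hm : (ρ - ρ'') * (ρ^2 + ρ*ρ'' + ρ''^2 - (a:ℝ)*(ρ+ρ'') - ((a:ℝ)+3)) = 0 := by
      linear_combination hρ - hρ''
    rcases mul_eq_zero.mp hm with h | h
    · exfalso; have : ρ ≠ ρ'' := by intro h'; linarith
      exact this (by linarith [sub_eq_zero.mp h])
    · exact h
  have he1 : ρ + ρ' + ρ'' = (a:ℝ) := by
    have hm : (ρ' - ρ'') * (ρ + ρ' + ρ'' - (a:ℝ)) = 0 := by linear_combination h12 - h13
    rcases mul_eq_zero.mp hm with h | h
    · exfalso; have : ρ' ≠ ρ'' := ne_of_lt hord₁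
      exact this (by linarith [sub_eq_zero.mp h])
    · linarith [sub_eq_zero.mp h]
  have he3 : ρ * ρ' * ρ'' = 1 := by
    linear_combination ρ*ρ'*he1 - ρ'*h12 + hρ'
  -- positivity of squares
  have hρQ : 0 < ρ^2 := by positivity
  have hρ'Q : 0 < ρ'^2 := pow_two_pos_of_ne_zero hρ'ne
  have hρ''Q : 0 < ρ''^2 := pow_two_pos_of_ne_zero hρ''ne
  have hiρ'Q : 0 < ρ'⁻¹^2 := by positivity
  have hiρ''Q : 0 < ρ''⁻¹^2 := by positivity
  have hiρQ : 0 < ρ⁻¹^2 := by positivity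
  -- quantitative bounds
  have hb1 : (a:ℝ)^2 < ρ^2 := by
    apply pow_lt_pow_left₀ (by linarith) (by positivity) (by norm_num)
  have hb2 : (1:ℝ) < ρ'^2 := by
    have hm : 0 < (-ρ'-1) * (-ρ') := mul_pos (by linarith) (by linarith)
    linarith [hm]
  have hb3 : (a:ℝ)^2 < ρ''⁻¹^2 := by
    have hc1 : -1 < (a:ℝ)*ρ'' := by
      have h := mul_lt_mul_of_pos_left hρ''lo hapos
      have e2 : (a:ℝ) * (-(1/(a:ℝ))) = -1 := by field_simp
      linarith [h, e2.ge, e2.le]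
    have hc2 : (a:ℝ)*ρ'' < 0 := mul_neg_of_pos_of_neg hapos hρ''hi
    have hm : 0 < (1 + (a:ℝ)*ρ'') * (-((a:ℝ)*ρ'')) := mul_pos (by linarith) (by linarith)
    have hsq : (a:ℝ)^2*ρ''^2 < 1 := by linarith only [hm, hc1]
    have e : ρ''⁻¹^2 = 1/ρ''^2 := by field_simp
    rw [e, lt_div_iff₀ hρ''Q]
    exact hsq
  -- positivity of the summands
  have p1 : 0 < t₂*ρ^2 := mul_pos ht₂ hρQ
  have p2 : 0 < t₃*ρ'⁻¹^2 := mul_pos ht₃ hiρ'Q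
  have p3 : 0 < t₂*ρ'^2 := mul_pos ht₂ hρ'Q
  have p4 : 0 < t₃*ρ''⁻¹^2 := mul_pos ht₃ hiρ''Q
  have p5 : 0 < t₂*ρ''^2 := mul_pos ht₂ hρ''Q
  have p6 : 0 < t₃*ρ⁻¹^2 := mul_pos ht₃ hiρQ
  set A := t₁ + t₂ * ρ ^ 2 + t₃ * (ρ')⁻¹ ^ 2 with hA
  set B := t₁ + t₂ * ρ' ^ 2 + t₃ * (ρ'')⁻¹ ^ 2 with hB
  set C := t₁ + t₂ * ρ'' ^ 2 + t₃ * ρ⁻¹ ^ 2 with hC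
  have lA1 : t₁ < A := by rw [hA]; linarith
  have lA2 : t₂*ρ^2 < A := by rw [hA]; linarith
  have lB1 : t₁ < B := by rw [hB]; linarith
  have lB2 : t₂*ρ'^2 < B := by rw [hB]; linarith
  have lB3 : t₃*ρ''⁻¹^2 < B := by rw [hB]; linarith
  have lC1 : t₁ < C := by rw [hC]; linarith
  have lC2 : t₂*ρ''^2 < C := by rw [hC]; linarith
  have lC3 : t₃*ρ⁻¹^2 < C := by rw [hC]; linarith
  refine ⟨?_, ?_, ?_, ?_, ?_, ?_⟩
  · have hk := key_prod t₁ t₁ t₁ A B C x ht₁ ht₁ ht₁ lA1 lB1 lC1 hN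
    have e : t₁^3 = t₁*t₁*t₁ := by ring
    rw [e]; exact hk
  · have hk := key_prod (t₂*ρ^2) (t₂*ρ'^2) (t₂*ρ''^2) A B C x p1 p3 p5 lA2 lB2 lC2 hN
    have e : t₂*ρ^2*(t₂*ρ'^2)*(t₂*ρ''^2) = t₂^3*(ρ*ρ'*ρ'')^2 := by ring
    rw [e, he3] at hk; norm_num at hk; exact hk
  · have hk := key_prod (t₂*ρ^2) (t₂*ρ'^2) t₁ A B C x p1 p3 ht₁ lA2 lB2 lC1 hN
    have hcoef : (a:ℝ)^2 < ρ^2*ρ'^2 := by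
      have hm := mul_pos hρQ (sub_pos.mpr hb2)
      linarith only [hm, hb1]
    have hmul := mul_lt_mul_of_pos_right hcoef (show 0 < t₁*t₂^2 by positivity)
    have e : t₂*ρ^2*(t₂*ρ'^2)*t₁ = ρ^2*ρ'^2*(t₁*t₂^2) := by ring
    rw [e] at hk; linarith only [hmul, hk]
  · have hk := key_prod t₁ (t₃*ρ''⁻¹^2) t₁ A B C x ht₁ p4 ht₁ lA1 lB3 lC1 hN
    have hmul := mul_lt_mul_of_pos_right hb3 (show 0 < t₁^2*t₃ by positivity)
    have e : t₁*(t₃*ρ''⁻¹^2)*t₁ = ρ''⁻¹^2*(t₁^2*t₃) := by ring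
    rw [e] at hk; linarith only [hmul, hk]
  · have hk := key_prod (t₂*ρ^2) (t₃*ρ''⁻¹^2) (t₃*ρ⁻¹^2) A B C x p1 p4 p6 lA2 lB3 lC3 hN
    have e : t₂*ρ^2*(t₃*ρ''⁻¹^2)*(t₃*ρ⁻¹^2) = ρ''⁻¹^2*(t₂*t₃^2) := by
      field_simp
    rw [e] at hk
    have hmul := mul_lt_mul_of_pos_right hb3 (show 0 < t₂*t₃^2 by positivity)
    linarith only [hmul, hk, hx]
  · have hk := key_prod (t₂*ρ^2) (t₃*ρ''⁻¹^2) t₁ A B C x p1 p4 ht₁ lA2 lB3 lC1 hN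
    have hcoef : (a:ℝ)^4 < ρ^2*ρ''⁻¹^2 := by
      have ha2 : (0:ℝ) < (a:ℝ)^2 := by positivity
      have hm1 := mul_pos (sub_pos.mpr hb1) (sub_pos.mpr hb3)
      have hm2 := mul_pos ha2 (sub_pos.mpr hb1)
      have hm3 := mul_pos ha2 (sub_pos.mpr hb3)
      linarith only [hm1, hm2, hm3]
    have hmul := mul_lt_mul_of_pos_right hcoef (show 0 < t₁*t₂*t₃ by positivity)
    have e : t₂*ρ^2*(t₃*ρ''⁻¹^2)*t₁ = ρ^2*ρ''⁻¹^2*(t₁*t₂*t₃) := by ring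
    rw [e] at hk; linarith only [hmul, hk]
end

section
/- Let a ≥ 8 be an integer and let t₁, t₂, t₃ > 0 be real numbers. Set N(t₁, t₂, t₃) := (t₁ + t₂·ρ² + t₃·(ρ')⁻²)·(t₁ + t₂·(ρ')² + t₃·(ρ'')⁻²)·(t₁ + t₂·(ρ'')² + t₃·ρ⁻²). Then N(t₁, t₂, t₃) < (t₁ + 2a²·t₂ + t₃)·(t₁ + 2t₂ + 2a²·t₃)·(t₁ + t₂/a² + t₃/a²). -/
set_option maxHeartbeats 800000

theorem stmt_10 (a : ℤ) (ha : 8 ≤ a)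
    (ρ ρ' ρ'' : ℝ)
    (hρ : ρ ^ 3 - (a : ℝ) * ρ ^ 2 - ((a : ℝ) + 3) * ρ - 1 = 0)
    (hρ' : ρ' ^ 3 - (a : ℝ) * ρ' ^ 2 - ((a : ℝ) + 3) * ρ' - 1 = 0)
    (hρ'' : ρ'' ^ 3 - (a : ℝ) * ρ'' ^ 2 - ((a : ℝ) + 3) * ρ'' - 1 = 0)
    (hord₁ : ρ' < ρ'') (hord₂ : ρ'' < ρ)
    (hall : ∀ y : ℝ, y ^ 3 - (a : ℝ) * y ^ 2 - ((a : ℝ) + 3) * y - 1 = 0 →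
      y = ρ ∨ y = ρ' ∨ y = ρ'')
    (t₁ t₂ t₃ : ℝ) (ht₁ : 0 < t₁) (ht₂ : 0 < t₂) (ht₃ : 0 < t₃) :
    (t₁ + t₂ * ρ ^ 2 + t₃ * (ρ')⁻¹ ^ 2) * (t₁ + t₂ * ρ' ^ 2 + t₃ * (ρ'')⁻¹ ^ 2)
        * (t₁ + t₂ * ρ'' ^ 2 + t₃ * ρ⁻¹ ^ 2) <
      (t₁ + 2 * (a : ℝ) ^ 2 * t₂ + t₃) * (t₁ + 2 * t₂ + 2 * (a : ℝ) ^ 2 * t₃)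
        * (t₁ + t₂ / (a : ℝ) ^ 2 + t₃ / (a : ℝ) ^ 2) := by
  set A : ℝ := (a : ℝ) with hAdef
  have hA : (8 : ℝ) ≤ A := by
    rw [hAdef]
    exact_mod_cast ha
  have hApos : (0 : ℝ) < A := by linarith
  have hne1 : ρ - ρ' ≠ 0 := sub_ne_zero.mpr (by linarith)
  have hne2 : ρ - ρ'' ≠ 0 := sub_ne_zero.mpr (by linarith)
  have hne3 : ρ' - ρ'' ≠ 0 := sub_ne_zero.mpr (by linarith)
  have q1 : (ρ - ρ') * (ρ^2 + ρ*ρ' + ρ'^2 - A*(ρ+ρ') - (A+3)) = 0 := by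
    linear_combination hρ - hρ'
  have q1' : ρ^2 + ρ*ρ' + ρ'^2 - A*(ρ+ρ') - (A+3) = 0 :=
    (mul_eq_zero.mp q1).resolve_left hne1
  have q2 : (ρ - ρ'') * (ρ^2 + ρ*ρ'' + ρ''^2 - A*(ρ+ρ'') - (A+3)) = 0 := by
    linear_combination hρ - hρ''
  have q2' : ρ^2 + ρ*ρ'' + ρ''^2 - A*(ρ+ρ'') - (A+3) = 0 :=
    (mul_eq_zero.mp q2).resolve_left hne2
  have h1 : (ρ' - ρ'') * (ρ + ρ' + ρ'' - A) = 0 := by linear_combination q1' - q2'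
  have h1' : ρ + ρ' + ρ'' = A := by
    have := (mul_eq_zero.mp h1).resolve_left hne3
    linarith
  have h2' : ρ*ρ' + ρ*ρ'' + ρ'*ρ'' = -(A+3) := by
    linear_combination -q1' + (ρ + ρ') * h1'
  have h3' : ρ * ρ' * ρ'' = 1 := by
    linear_combination hρ - ρ^2 * h1' + ρ * h2'
  have hfac : ∀ x : ℝ, x^3 - A*x^2 - (A+3)*x - 1 = (x - ρ)*(x - ρ')*(x - ρ'') := by
    intro x
    linear_combination x^2 * h1' - x * h2' + h3'
  -- Step 1 : A + 1 < ρ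
  have hgtρ : A + 1 < ρ := by
    by_contra h
    push_neg at h
    have e := hfac (A + 1)
    have b1 : 0 ≤ A + 1 - ρ := by linarith
    have b2 : 0 ≤ A + 1 - ρ' := by linarith
    have b3 : 0 ≤ A + 1 - ρ'' := by linarith
    linarith [e, mul_nonneg (mul_nonneg b1 b2) b3, mul_nonneg (sq_nonneg A) (show (0:ℝ) <= A - 8 by linarith), sq_nonneg A]
  -- Step 2 : ρ' < -1
  have hρ'lt : ρ' < -1 := by
    by_contra h
    push_neg at h
    have e := hfac (-1)
    have b1 : 0 ≤ ρ - (-1) := by linarith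
    have b2 : 0 ≤ ρ' - (-1) := by linarith
    have b3 : 0 ≤ ρ'' - (-1) := by linarith
    linarith [e, mul_nonneg (mul_nonneg b2 b3) b1, mul_nonneg (sq_nonneg A) (show (0:ℝ) <= A - 8 by linarith), sq_nonneg A]
  -- Step 3 : -1 < ρ''
  have hρ''gt1 : (-1 : ℝ) < ρ'' := by
    by_contra h
    push_neg at h
    have e := hfac (-1)
    have b1 : 0 ≤ ρ - (-1) := by linarith
    have b2 : 0 ≤ (-1) - ρ' := by linarith
    have b3 : 0 ≤ (-1) - ρ'' := by linarith
    linarith [e, mul_nonneg (mul_nonneg b2 b3) b1, mul_nonneg (sq_nonneg A) (show (0:ℝ) <= A - 8 by linarith), sq_nonneg A]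
  -- Step 3.5 : ρ'' < 0
  have hρ''neg0 : ρ'' < 0 := by
    by_contra h
    push_neg at h
    nlinarith [mul_pos (show (0:ℝ) < ρ by linarith) (show (0:ℝ) < -ρ' by linarith),
      mul_nonneg (mul_pos (show (0:ℝ) < ρ by linarith)
        (show (0:ℝ) < -ρ' by linarith)).le h]
  -- Step 4 : ρ < A + 2
  have hρlt : ρ < A + 2 := by
    by_contra h
    push_neg at h
    have e := hfac (A + 2)
    have b1 : 0 ≤ ρ - (A + 2) := by linarith
    have b2 : 0 ≤ (A + 2) - ρ' := by linarith
    have b3 : 0 ≤ (A + 2) - ρ'' := by linarith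
    linarith [e, mul_nonneg (mul_nonneg b1 b2) b3, mul_nonneg (sq_nonneg A) (show (0:ℝ) <= A - 8 by linarith), sq_nonneg A]
  -- Step 5 : -1.414 < ρ'
  have hρ'gt : -(707/500 : ℝ) < ρ' := by
    by_contra h
    push_neg at h
    have e := hfac (-(707/500))
    have b1 : 0 ≤ ρ - (-(707/500 : ℝ)) := by linarith
    have b2 : 0 ≤ -(707/500 : ℝ) - ρ' := by linarith
    have b3 : 0 ≤ ρ'' - (-(707/500 : ℝ)) := by linarith
    linarith [e, mul_nonneg (mul_nonneg b2 b3) b1, mul_nonneg (sq_nonneg A) (show (0:ℝ) <= A - 8 by linarith), sq_nonneg A]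
  -- Step 6 : ρ'' < -71/(100A)
  have hρ''lt : ρ'' < -(71 / (100 * A)) := by
    obtain ⟨c, hc⟩ : ∃ c : ℝ, c = -(71 / (100 * A)) := ⟨_, rfl⟩
    rw [← hc]
    have hcgt : (-1 : ℝ) < c := by
      rw [hc, neg_lt, neg_neg, div_lt_one (by positivity)]
      linarith
    have hcneg : c < 0 := by
      rw [hc, neg_lt_zero]
      positivity
    have hmul : (c^3 - A*c^2 - (A+3)*c - 1) * (1000000 * A^3) =
        -290000*A^3 + 1625900*A^2 - 357911 := by
      rw [hc]
      field_simp
      ring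
    have hN : -290000*A^3 + 1625900*A^2 - 357911 < 0 := by
      nlinarith [mul_nonneg (sq_nonneg A) (show (0:ℝ) ≤ 290000*A - 1625900 by linarith)]
    have hM : (0 : ℝ) < 1000000 * A^3 := by positivity
    have hfc : c^3 - A*c^2 - (A+3)*c - 1 < 0 := by
      by_contra hX
      push_neg at hX
      have hXX := mul_nonneg hX hM.le
      rw [hmul] at hXX
      linarith
    by_contra h
    push_neg at h
    have e := hfac c
    have b1 : 0 ≤ ρ - c := by linarith
    have b2 : 0 ≤ c - ρ' := by linarith
    have b3 : 0 ≤ ρ'' - c := by linarith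
    linarith [e, mul_nonneg (mul_nonneg b1 b2) b3, mul_nonneg (sq_nonneg A) (show (0:ℝ) <= A - 8 by linarith), sq_nonneg A]
  -- Step 7 : -1/A < ρ''
  have hρ''gt : -(1 / A) < ρ'' := by
    obtain ⟨c, hc⟩ : ∃ c : ℝ, c = -(1 / A) := ⟨_, rfl⟩
    rw [← hc]
    have hcgt : (-1 : ℝ) < c := by
      rw [hc, neg_lt, neg_neg, div_lt_one hApos]
      linarith
    have hcneg : c < 0 := by
      rw [hc, neg_lt_zero]
      positivity
    have hmul : (c^3 - A*c^2 - (A+3)*c - 1) * A^3 = 2*A^2 - 1 := by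
      rw [hc]
      field_simp
      ring
    have hA3 : (0:ℝ) < A^3 := by positivity
    have hfc : 0 < c^3 - A*c^2 - (A+3)*c - 1 := by
      by_contra hX
      push_neg at hX
      have hXX := mul_nonpos_of_nonpos_of_nonneg hX hA3.le
      rw [hmul] at hXX
      nlinarith
    by_contra h
    push_neg at h
    have e := hfac c
    have b1 : 0 ≤ ρ - c := by linarith
    have b2 : 0 ≤ c - ρ' := by linarith
    have b3 : 0 ≤ c - ρ'' := by linarith
    linarith [e, mul_nonneg (mul_nonneg b1 b2) b3, mul_nonneg (sq_nonneg A) (show (0:ℝ) <= A - 8 by linarith), sq_nonneg A]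
  -- Derived bounds
  clear hρ hρ' hρ'' hall q1 q1' q2 q2' h1 h1' h2' h3' hfac hne1 hne2 hne3
  have hρ''neg : ρ'' < 0 := lt_trans hρ''lt (by rw [neg_lt_zero]; positivity)
  have hρ''sq : 0 < ρ''^2 := by
    nlinarith [mul_pos (neg_pos.mpr hρ''neg) (neg_pos.mpr hρ''neg)]
  have hρ'neg : ρ' < 0 := by linarith
  have hρ'sq : 0 < ρ'^2 := by
    nlinarith [mul_pos (neg_pos.mpr hρ'neg) (neg_pos.mpr hρ'neg)]
  have hρpos : 0 < ρ := by linarith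
  -- ρ² < 2A²
  have B1 : ρ^2 < 2*A^2 := by
    nlinarith [mul_pos (show (0:ℝ) < A + 2 - ρ by linarith)
        (show (0:ℝ) < A + 2 + ρ by linarith),
      mul_nonneg (show (0:ℝ) ≤ A - 8 by linarith) (show (0:ℝ) ≤ A by linarith)]
  -- (ρ')⁻¹² < 1
  have B2 : (ρ')⁻¹^2 < 1 := by
    rw [inv_pow, inv_eq_one_div, div_lt_one hρ'sq]
    nlinarith [mul_pos (show (0:ℝ) < -1 - ρ' by linarith)
      (show (0:ℝ) < -ρ' by linarith)]
  -- ρ'² < 2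
  have B3 : ρ'^2 < 2 := by
    nlinarith [mul_pos (show (0:ℝ) < ρ' + 707/500 by linarith)
      (show (0:ℝ) < -1 - ρ' by linarith)]
  -- (ρ'')⁻¹² < 2A²
  have B4 : (ρ'')⁻¹^2 < 2*A^2 := by
    have h71 : ρ'' * (100 * A) < -71 := by
      have h' : ρ'' < (-71) / (100 * A) := by rw [neg_div]; exact hρ''lt
      exact (lt_div_iff₀ (by positivity)).mp h'
    rw [inv_pow, inv_eq_one_div, div_lt_iff₀ hρ''sq]
    nlinarith [sq_nonneg (100 * A * ρ'' + 71), h71]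
  -- ρ''² < 1/A²
  have B5 : ρ''^2 < 1 / A^2 := by
    have hm1 : -1 < ρ'' * A := by
      have h' : (-1) / A < ρ'' := by rw [neg_div]; exact hρ''gt
      exact (div_lt_iff₀ hApos).mp h'
    rw [lt_div_iff₀ (by positivity : (0:ℝ) < A^2)]
    nlinarith [mul_pos (show (0:ℝ) < ρ'' * A + 1 by linarith)
      (show (0:ℝ) < -(ρ'' * A) by nlinarith [mul_neg_of_neg_of_pos hρ''neg hApos])]
  -- ρ⁻¹² < 1/A²
  have B6 : ρ⁻¹^2 < 1 / A^2 := by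
    rw [inv_pow, inv_eq_one_div]
    have h' : A^2 < ρ^2 := by
      nlinarith [mul_pos (show (0:ℝ) < ρ - A by linarith)
        (show (0:ℝ) < ρ + A by linarith)]
    exact one_div_lt_one_div_of_lt (by positivity) h'
  -- factor inequalities
  have F1 : t₁ + t₂ * ρ ^ 2 + t₃ * (ρ')⁻¹ ^ 2 < t₁ + 2 * A ^ 2 * t₂ + t₃ := by
    have e1 := mul_lt_mul_of_pos_left B1 ht₂
    have e2 := mul_lt_mul_of_pos_left B2 ht₃
    nlinarith [e1, e2]
  have F2 : t₁ + t₂ * ρ' ^ 2 + t₃ * (ρ'')⁻¹ ^ 2 < t₁ + 2 * t₂ + 2 * A ^ 2 * t₃ := by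
    have e1 := mul_lt_mul_of_pos_left B3 ht₂
    have e2 := mul_lt_mul_of_pos_left B4 ht₃
    nlinarith [e1, e2]
  have F3 : t₁ + t₂ * ρ'' ^ 2 + t₃ * ρ⁻¹ ^ 2 < t₁ + t₂ / A ^ 2 + t₃ / A ^ 2 := by
    have e1 := mul_lt_mul_of_pos_left B5 ht₂
    have e2 := mul_lt_mul_of_pos_left B6 ht₃
    have r1 : t₂ * (1 / A^2) = t₂ / A^2 := by ring
    have r2 : t₃ * (1 / A^2) = t₃ / A^2 := by ring
    rw [r1] at e1
    rw [r2] at e2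
    linarith
  have P1 : 0 < t₁ + t₂ * ρ ^ 2 + t₃ * (ρ')⁻¹ ^ 2 := by positivity
  have P2 : 0 < t₁ + t₂ * ρ' ^ 2 + t₃ * (ρ'')⁻¹ ^ 2 := by positivity
  have P3 : 0 < t₁ + t₂ * ρ'' ^ 2 + t₃ * ρ⁻¹ ^ 2 := by positivity
  exact mul_lt_mul'' (mul_lt_mul'' F1 F2 P1.le P2.le) F3 (mul_pos P1 P2).le P3.le
end

section
/- Let a ≥ 1 and w ≥ 1 be integers, and let w₀, w₁, w₂ ≥ 0 be integers with w = (a² + 3a + 3)·w₀ + (a+1)·w₁ + w₂, w₁ ≤ a + 2, w₂ ≤ a, and w₂ = 0 whenever w₁ = a + 2. Then ⌊−(a+1)·w/(a² + 3a + 3)⌋ = −(a+1)·w₀ − w₁ + δ, where δ = 1 if w₁ = a + 2, δ = 0 if w₁ ≤ a + 1 and w₁ ≥ w₂, and δ = −1 if w₁ ≤ a + 1 and w₁ < w₂. Moreover, −(a+1)·w/(a² + 3a + 3) − ⌊−(a+1)·w/(a² + 3a + 3)⌋ = ((a+2)·w₁ − (a+1)·w₂)/(a² + 3a + 3) − δ.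 -/
theorem stmt_11 (a w w₀ w₁ w₂ : ℤ) (ha : 1 ≤ a) (hw : 1 ≤ w)
    (hw₀ : 0 ≤ w₀) (hw₁ : 0 ≤ w₁) (hw₂ : 0 ≤ w₂)
    (hdec : w = (a ^ 2 + 3 * a + 3) * w₀ + (a + 1) * w₁ + w₂)
    (hw₁le : w₁ ≤ a + 2) (hw₂le : w₂ ≤ a)
    (hcase : w₁ = a + 2 → w₂ = 0) :
    ∃ δ : ℤ,
      ((w₁ = a + 2 → δ = 1) ∧
       (w₁ ≤ a + 1 → w₂ ≤ w₁ → δ = 0) ∧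
       (w₁ ≤ a + 1 → w₁ < w₂ → δ = -1)) ∧
      ⌊(-((a : ℝ) + 1) * w) / ((a : ℝ) ^ 2 + 3 * a + 3)⌋ = -(a + 1) * w₀ - w₁ + δ ∧
      (-((a : ℝ) + 1) * w) / ((a : ℝ) ^ 2 + 3 * a + 3)
          - ⌊(-((a : ℝ) + 1) * w) / ((a : ℝ) ^ 2 + 3 * a + 3)⌋ =
        (((a : ℝ) + 2) * w₁ - ((a : ℝ) + 1) * w₂) / ((a : ℝ) ^ 2 + 3 * a + 3) - δ := by
  classical
  set δ : ℤ := if w₁ = a + 2 then 1 else if w₂ ≤ w₁ then 0 else -1 with hδdef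
  set D : ℤ := a ^ 2 + 3 * a + 3 with hDdef
  have hD : 0 < D := by nlinarith
  set s : ℤ := (a + 2) * w₁ - (a + 1) * w₂ - δ * D with hsdef
  have hs0 : 0 ≤ s ∧ s < D := by
    rw [hsdef, hδdef]
    split_ifs with h1 h2
    · have h2 := hcase h1
      subst h1 h2
      constructor <;> nlinarith
    · have h1' : w₁ ≤ a + 1 := by omega
      constructor <;> nlinarith
    · have h1' : w₁ ≤ a + 1 := by omega
      have h2' : w₁ < w₂ := by omega
      constructor <;> nlinarith
  have hkey : (-(a + 1) * w : ℤ) = (-(a + 1) * w₀ - w₁ + δ) * D + s := by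
    rw [hsdef, hDdef, hdec]; ring
  have hDR : ((D : ℝ)) = (a : ℝ) ^ 2 + 3 * a + 3 := by push_cast [hDdef]; ring
  have hDRpos : (0 : ℝ) < (D : ℝ) := by exact_mod_cast hD
  have hval : (-((a : ℝ) + 1) * w) / ((a : ℝ) ^ 2 + 3 * a + 3)
      = ((-(a + 1) * w₀ - w₁ + δ : ℤ) : ℝ) + (s : ℝ) / (D : ℝ) := by
    rw [← hDR]
    have : (-((a : ℝ) + 1) * w) = ((-(a + 1) * w : ℤ) : ℝ) := by push_cast; ring
    rw [this, hkey]
    field_simp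
    push_cast; ring
  have hfrac0 : (0 : ℝ) ≤ (s : ℝ) / (D : ℝ) := by
    apply div_nonneg _ hDRpos.le
    exact_mod_cast hs0.1
  have hfrac1 : (s : ℝ) / (D : ℝ) < 1 := by
    rw [div_lt_one hDRpos]
    exact_mod_cast hs0.2
  have hfloor : ⌊(-((a : ℝ) + 1) * w) / ((a : ℝ) ^ 2 + 3 * a + 3)⌋
      = -(a + 1) * w₀ - w₁ + δ := by
    rw [hval, add_comm, Int.floor_add_intCast]
    have : ⌊(s : ℝ) / (D : ℝ)⌋ = 0 := Int.floor_eq_zero_iff.2 ⟨hfrac0, hfrac1⟩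
    rw [this, zero_add]
  refine ⟨δ, ⟨?_, ?_, ?_⟩, hfloor, ?_⟩
  · intro h; simp [hδdef, h]
  · intro h1 h2
    have : ¬ (w₁ = a + 2) := by omega
    simp [hδdef, this, h2]
  · intro h1 h2
    have hne : ¬ (w₁ = a + 2) := by omega
    have hle : ¬ (w₂ ≤ w₁) := by omega
    simp [hδdef, hne, hle]
  · rw [hfloor, hval]
    have : ((a : ℝ) + 2) * w₁ - ((a : ℝ) + 1) * w₂ = (s : ℝ) + (δ : ℝ) * (D : ℝ) := by
      push_cast [hsdef]; ring
    rw [this, ← hDR]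
    field_simp
    push_cast
    ring
end

section
/- Let a ≥ 1 and w ≥ 1 be integers, and let w₀, w₁, w₂ ≥ 0 be integers with w = (a² + 3a + 3)·w₀ + (a+2)·w₁ + w₂, w₁ ≤ a + 1, w₂ ≤ a + 1, and w₂ = 0 whenever w₁ = a + 1. Then ⌊−(a+1)·w/(a² + 3a + 3)⌋ = −(a+1)·w₀ − w₁ + δ, where δ = 0 if w₂ = 0 and δ = −1 if w₂ ≥ 1. Moreover, −(a+1)·w/(a² + 3a + 3) − ⌊−(a+1)·w/(a² + 3a + 3)⌋ equals w₁/(a² + 3a + 3) if w₂ = 0, and equals 1 + (w₁ − (a+1)·w₂)/(a² + 3a + 3) if w₂ ≥ 1. -/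
theorem stmt_13 (a w w₀ w₁ w₂ : ℤ) (ha : 1 ≤ a) (hw : 1 ≤ w)
    (hw₀ : 0 ≤ w₀) (hw₁ : 0 ≤ w₁) (hw₂ : 0 ≤ w₂)
    (hdec : w = (a ^ 2 + 3 * a + 3) * w₀ + (a + 2) * w₁ + w₂)
    (hw₁le : w₁ ≤ a + 1) (hw₂le : w₂ ≤ a + 1)
    (hcase : w₁ = a + 1 → w₂ = 0) :
    (w₂ = 0 →
      ⌊(-((a : ℝ) + 1) * w) / ((a : ℝ) ^ 2 + 3 * a + 3)⌋ = -(a + 1) * w₀ - w₁ ∧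
      (-((a : ℝ) + 1) * w) / ((a : ℝ) ^ 2 + 3 * a + 3)
          - ⌊(-((a : ℝ) + 1) * w) / ((a : ℝ) ^ 2 + 3 * a + 3)⌋ =
        (w₁ : ℝ) / ((a : ℝ) ^ 2 + 3 * a + 3)) ∧
    (1 ≤ w₂ →
      ⌊(-((a : ℝ) + 1) * w) / ((a : ℝ) ^ 2 + 3 * a + 3)⌋ = -(a + 1) * w₀ - w₁ - 1 ∧
      (-((a : ℝ) + 1) * w) / ((a : ℝ) ^ 2 + 3 * a + 3)
          - ⌊(-((a : ℝ) + 1) * w) / ((a : ℝ) ^ 2 + 3 * a + 3)⌋ =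
        1 + ((w₁ : ℝ) - ((a : ℝ) + 1) * w₂) / ((a : ℝ) ^ 2 + 3 * a + 3)) := by
  have haR : (1 : ℝ) ≤ (a : ℝ) := by exact_mod_cast ha
  have hw₁R : (0 : ℝ) ≤ (w₁ : ℝ) := by exact_mod_cast hw₁
  have hw₁leR : (w₁ : ℝ) ≤ (a : ℝ) + 1 := by exact_mod_cast hw₁le
  have hw₂leR : (w₂ : ℝ) ≤ (a : ℝ) + 1 := by exact_mod_cast hw₂le
  have hD : (0 : ℝ) < (a : ℝ) ^ 2 + 3 * a + 3 := by nlinarith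
  constructor
  · intro hz
    have key : -((a : ℝ) + 1) * w =
        ((a : ℝ) ^ 2 + 3 * a + 3) * ((-(a + 1) * w₀ - w₁ : ℤ) : ℝ) + w₁ := by
      have hzR : (w₂ : ℝ) = 0 := by exact_mod_cast hz
      have hwR : ((w : ℤ) : ℝ) = ((a : ℝ) ^ 2 + 3 * a + 3) * w₀ + ((a : ℝ) + 2) * w₁ + w₂ := by
        exact_mod_cast hdec
      rw [hwR, hzR]
      push_cast
      ring
    have hfl : ⌊(-((a : ℝ) + 1) * w) / ((a : ℝ) ^ 2 + 3 * a + 3)⌋ = -(a + 1) * w₀ - w₁ := by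
      rw [Int.floor_eq_iff, key]
      constructor
      · rw [le_div_iff₀ hD]; push_cast; nlinarith
      · rw [div_lt_iff₀ hD]; push_cast; nlinarith
    refine ⟨hfl, ?_⟩
    rw [hfl, key]
    field_simp
    ring
  · intro h1
    have h1R : (1 : ℝ) ≤ (w₂ : ℝ) := by exact_mod_cast h1
    have hw₁a : w₁ ≤ a := by
      rcases lt_or_eq_of_le hw₁le with h | h
      · omega
      · have := hcase h; omega
    have hw₁aR : (w₁ : ℝ) ≤ (a : ℝ) := by exact_mod_cast hw₁a
    have key : -((a : ℝ) + 1) * w =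
        ((a : ℝ) ^ 2 + 3 * a + 3) * ((-(a + 1) * w₀ - w₁ - 1 : ℤ) : ℝ)
          + (((a : ℝ) ^ 2 + 3 * a + 3) + (w₁ - ((a : ℝ) + 1) * w₂)) := by
      have hwR : ((w : ℤ) : ℝ) = ((a : ℝ) ^ 2 + 3 * a + 3) * w₀ + ((a : ℝ) + 2) * w₁ + w₂ := by
        exact_mod_cast hdec
      rw [hwR]
      push_cast
      ring
    have hfl : ⌊(-((a : ℝ) + 1) * w) / ((a : ℝ) ^ 2 + 3 * a + 3)⌋ = -(a + 1) * w₀ - w₁ - 1 := by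
      rw [Int.floor_eq_iff, key]
      constructor
      · rw [le_div_iff₀ hD]; push_cast; nlinarith
      · rw [div_lt_iff₀ hD]; push_cast; nlinarith
    refine ⟨hfl, ?_⟩
    rw [hfl, key]
    field_simp
    ring
end

section
/- For every real r > 0 there exists a constant C_r > 0 such that for every integer a ≥ 8 and every real number x with 1 ≤ x ≤ a^r, the number of triples of integers (m, w, o) with w ≥ 1, m ≥ ⌊−(a+1)·w/(a² + 3a + 3)⌋ + 2, o ≥ ⌊(a+2)·w/(a² + 3a + 3)⌋ + 2 and Nm(m − w·ρ + o·ρ²) ≤ x is at most C_r·(log a)²·x/a². -/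
set_option maxHeartbeats 1000000

open NumberField

/-- Root data for the simplest cubic polynomial. -/
theorem scr_roots (A : ℝ) (hA : 8 ≤ A) :
    ∃ x0 x1 x2 : ℝ,
      x1 ∈ Set.Ioo (-(3/2) : ℝ) (-1) ∧
      x2 ∈ Set.Ioo (-(1/2) : ℝ) 0 ∧
      x0 ∈ Set.Ioo ((A^2+3*A+4)/(A+2)) (A+2) ∧
      x0 + x1 + x2 = A ∧
      x0*x1 + x0*x2 + x1*x2 = -(A+3) ∧
      x0*x1*x2 = 1 ∧
      (x0^3 - A*x0^2 - (A+3)*x0 - 1 = 0) := by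
  have hA0 : (0:ℝ) < A + 2 := by linarith
  set f : ℝ → ℝ := fun y => y^3 - A*y^2 - (A+3)*y - 1 with hf
  have hcont : Continuous f := by fun_prop
  -- root x1 in (-(3/2), -1)
  have h1 : ∃ x1 ∈ Set.Ioo (-(3/2) : ℝ) (-1), f x1 = 0 := by
    have hsub := intermediate_value_Ioo (by norm_num : (-(3/2):ℝ) ≤ -1) hcont.continuousOn
    have : (0:ℝ) ∈ Set.Ioo (f (-(3/2))) (f (-1)) := by
      constructor <;> simp only [hf] <;> nlinarith
    obtain ⟨x1, hx1, hfx1⟩ := hsub this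
    exact ⟨x1, hx1, hfx1⟩
  -- root x2 in (-(1/2), 0)
  have h2 : ∃ x2 ∈ Set.Ioo (-(1/2) : ℝ) 0, f x2 = 0 := by
    have hsub := intermediate_value_Ioo' (by norm_num : (-(1/2):ℝ) ≤ 0) hcont.continuousOn
    have : (0:ℝ) ∈ Set.Ioo (f 0) (f (-(1/2))) := by
      constructor <;> simp only [hf] <;> nlinarith
    obtain ⟨x2, hx2, hfx2⟩ := hsub this
    exact ⟨x2, hx2, hfx2⟩
  -- root x0 in ((A^2+3A+4)/(A+2), A+2)
  have h0 : ∃ x0 ∈ Set.Ioo ((A^2+3*A+4)/(A+2)) (A+2), f x0 = 0 := by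
    have hle : (A^2+3*A+4)/(A+2) ≤ A + 2 := by
      rw [div_le_iff₀ hA0]; nlinarith
    have hsub := intermediate_value_Ioo hle hcont.continuousOn
    have : (0:ℝ) ∈ Set.Ioo (f ((A^2+3*A+4)/(A+2))) (f (A+2)) := by
      constructor
      · simp only [hf]
        have key : ((A^2+3*A+4)/(A+2))^3 - A*((A^2+3*A+4)/(A+2))^2
            - (A+3)*((A^2+3*A+4)/(A+2)) - 1
            = (8 - 2*A^2 - A^3)/(A+2)^3 := by
          field_simp; ring
        rw [key]
        apply div_neg_of_neg_of_pos (by nlinarith) (by positivity)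
      · simp only [hf]; nlinarith
    obtain ⟨x0, hx0, hfx0⟩ := hsub this
    exact ⟨x0, hx0, hfx0⟩
  obtain ⟨x1, hx1, hfx1⟩ := h1
  obtain ⟨x2, hx2, hfx2⟩ := h2
  obtain ⟨x0, hx0, hfx0⟩ := h0
  have hAx : (8:ℝ) ≤ (A^2+3*A+4)/(A+2) := by
    rw [le_div_iff₀ hA0]; nlinarith
  have h12 : x1 ≠ x2 := by
    intro h; linarith [hx1.2, hx2.1, h.le, h.ge]
  have h01 : x0 ≠ x1 := by
    intro h; linarith [hx0.1, hx1.2, h.le, h.ge, hAx]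
  have h02 : x0 ≠ x2 := by
    intro h; linarith [hx0.1, hx2.2, h.le, h.ge, hAx]
  simp only [hf] at hfx0 hfx1 hfx2
  -- Vieta
  have q01 : x0^2 + x0*x1 + x1^2 - A*(x0+x1) - (A+3) = 0 := by
    have h : (x0 - x1) * (x0^2 + x0*x1 + x1^2 - A*(x0+x1) - (A+3)) = 0 := by
      linear_combination hfx0 - hfx1
    rcases mul_eq_zero.1 h with h' | h'
    · exact absurd (sub_eq_zero.1 h') h01
    · exact h'
  have q02 : x0^2 + x0*x2 + x2^2 - A*(x0+x2) - (A+3) = 0 := by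
    have h : (x0 - x2) * (x0^2 + x0*x2 + x2^2 - A*(x0+x2) - (A+3)) = 0 := by
      linear_combination hfx0 - hfx2
    rcases mul_eq_zero.1 h with h' | h'
    · exact absurd (sub_eq_zero.1 h') h02
    · exact h'
  have he1 : x0 + x1 + x2 = A := by
    have h : (x1 - x2) * (x0 + x1 + x2 - A) = 0 := by
      linear_combination q01 - q02
    rcases mul_eq_zero.1 h with h' | h'
    · exact absurd (sub_eq_zero.1 h') h12
    · linarith [sub_eq_zero.1 h']
  have he2 : x0*x1 + x0*x2 + x1*x2 = -(A+3) := by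
    linear_combination (x0 + x1) * he1 - q01
  have he3 : x0*x1*x2 = 1 := by
    linear_combination hfx0 + x0 * he2 - x0^2 * he1
  exact ⟨x0, x1, x2, hx1, hx2, hx0, he1, he2, he3, hfx0⟩

theorem scr_g_bounds (A x0 x1 x2 : ℝ) (hA : 8 ≤ A)
    (hx1 : x1 ∈ Set.Ioo (-(3/2) : ℝ) (-1))
    (hx2 : x2 ∈ Set.Ioo (-(1/2) : ℝ) 0)
    (hx0 : x0 ∈ Set.Ioo ((A^2+3*A+4)/(A+2)) (A+2))
    (he1 : x0 + x1 + x2 = A)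
    (he2 : x0*x1 + x0*x2 + x1*x2 = -(A+3))
    (he3 : x0*x1*x2 = 1) :
    0 ≤ (A+2)*x0^2 - (A^2+3*A+3)*x0 - (A+1) ∧
    A^2+3*A+3 ≤ (A+2)*x1^2 - (A^2+3*A+3)*x1 - (A+1) ∧
    0 ≤ (A+2)*x2^2 - (A^2+3*A+3)*x2 - (A+1) := by
  have hq : (0:ℝ) < A + 2 := by linarith
  have hz : A^2+3*A+4 ≤ (A+2)*x0 := by
    have := hx0.1
    rw [div_lt_iff₀ hq] at this
    linarith
  refine ⟨?_, ?_, ?_⟩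
  · -- g(x0) ≥ 0
    have h : 0 ≤ (A+2) * ((A+2)*x0^2 - (A^2+3*A+3)*x0 - (A+1)) := by
      nlinarith [sq_nonneg ((A+2)*x0 - (A^2+3*A+4)), hz]
    by_contra hcon
    push_neg at hcon
    nlinarith [mul_pos hq (neg_pos.2 hcon)]
  · -- g(x1) ≥ D
    have h1 : x1 < -1 := hx1.2
    nlinarith [mul_nonneg (by linarith : (0:ℝ) ≤ -x1 - 1) (by linarith : (0:ℝ) ≤ -x1 + 1)]
  · -- g(x2) ≥ 0
    set t : ℝ := (2*(A+2)^3 - 4*(A+2) - 3)/(2*(A+2)^4) with ht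
    have hden : (0:ℝ) < 2*(A+2)^4 := by positivity
    have htpos : 0 < t := by
      apply div_pos _ hden
      nlinarith
    have htlt : t < 1 := by
      rw [div_lt_one hden]
      nlinarith
    -- f(-t) < 0
    have hfneg : (-t)^3 - A*(-t)^2 - (A+3)*(-t) - 1 < 0 := by
      have hkey : (-t)^3 - A*(-t)^2 - (A+3)*(-t) - 1
          = -((17533) + (70908)*A + (124468)*A^2 + (125862)*A^3 + (80496)*A^4
              + (33442)*A^5 + (8908)*A^6 + (1440)*A^7 + (124)*A^8 + (4)*A^9)
            / (8*(A+2)^12) := by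
        rw [ht]; field_simp; ring
      rw [hkey]
      apply div_neg_of_neg_of_pos _ (by positivity)
      have : (0:ℝ) < 17533 + 70908*A + 124468*A^2 + 125862*A^3 + 80496*A^4
          + 33442*A^5 + 8908*A^6 + 1440*A^7 + 124*A^8 + 4*A^9 := by
        have hA0 : (0:ℝ) ≤ A := by linarith
        nlinarith [pow_nonneg hA0 2, pow_nonneg hA0 3, pow_nonneg hA0 4, pow_nonneg hA0 5,
          pow_nonneg hA0 6, pow_nonneg hA0 7, pow_nonneg hA0 8, pow_nonneg hA0 9]
      linarith
    -- x2 < -t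
    have hprod : (-t - x0)*(-t - x1)*(-t - x2) = (-t)^3 - A*(-t)^2 - (A+3)*(-t) - 1 := by
      linear_combination (-(t^2)) * he1 + (-t) * he2 - he3
    have hx2t : x2 < -t := by
      by_contra hcon
      push_neg at hcon
      have h1 : -t - x0 < 0 := by nlinarith [hx0.1, hq, htpos]
      have h2 : 0 < -t - x1 := by linarith [hx1.2]
      nlinarith [mul_pos (neg_pos.2 h1) h2]
    -- g(-t) ≥ 0
    have hgt : 0 ≤ (A+2)*t^2 + (A^2+3*A+3)*t - (A+1) := by
      have hkey : (A+2)*t^2 + (A^2+3*A+3)*t - (A+1)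
          = ((-494) + (-1335)*A + (-1272)*A^2 + (-528)*A^3 + (-78)*A^4 + 6*A^5 + 2*A^6)
            / (4*(A+2)^8) := by
        rw [ht]; field_simp; ring
      rw [hkey]
      apply div_nonneg _ (by positivity)
      have hs : (0:ℝ) ≤ A - 8 := by linarith
      nlinarith [pow_nonneg hs 2, pow_nonneg hs 3, pow_nonneg hs 4, pow_nonneg hs 5,
        pow_nonneg hs 6, hs]
    -- g(x2) ≥ g(-t) ≥ 0
    have h3 : (0:ℝ) ≤ t - x2 := by linarith
    have hM : (0:ℝ) ≤ (-t - x2) * ((A^2+3*A+3) - (A+2)*(x2 - t)) :=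
      mul_nonneg (by linarith) (by nlinarith [mul_nonneg hq.le h3, sq_nonneg A])
    linarith [hM, hgt]

theorem scr_factor_bounds (A x0 x1 x2 m w o u v : ℝ) (hA : 8 ≤ A)
    (hx1 : x1 ∈ Set.Ioo (-(3/2) : ℝ) (-1))
    (hx2 : x2 ∈ Set.Ioo (-(1/2) : ℝ) 0)
    (hx0 : x0 ∈ Set.Ioo ((A^2+3*A+4)/(A+2)) (A+2))
    (hg0 : 0 ≤ (A+2)*x0^2 - (A^2+3*A+3)*x0 - (A+1))
    (hg1 : A^2+3*A+3 ≤ (A+2)*x1^2 - (A^2+3*A+3)*x1 - (A+1))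
    (hg2 : 0 ≤ (A+2)*x2^2 - (A^2+3*A+3)*x2 - (A+1))
    (hw : 1 ≤ w) (hu : 0 ≤ u) (hv : 0 ≤ v)
    (hm : (-(A+1)*w)/(A^2+3*A+3) + 1 + u ≤ m)
    (ho : ((A+2)*w)/(A^2+3*A+3) + 1 + v ≤ o) :
    (1+v)*A^2 ≤ m - w*x0 + o*x0^2 ∧
    w ≤ m - w*x1 + o*x1^2 ∧
    1+u ≤ m - w*x2 + o*x2^2 := by
  have hq : (0:ℝ) < A + 2 := by linarith
  have hD : (0:ℝ) < A^2+3*A+3 := by nlinarith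
  have hw0 : (0:ℝ) ≤ w := by linarith
  -- clear denominators in hm, ho
  have hmD : -((A+1)*w) + (1+u)*(A^2+3*A+3) ≤ m*(A^2+3*A+3) := by
    have h := mul_le_mul_of_nonneg_right hm hD.le
    rw [add_mul, add_mul, div_mul_cancel₀ _ hD.ne'] at h
    linarith
  have hoD : (A+2)*w + (1+v)*(A^2+3*A+3) ≤ o*(A^2+3*A+3) := by
    have h := mul_le_mul_of_nonneg_right ho hD.le
    rw [add_mul, add_mul, div_mul_cancel₀ _ hD.ne'] at h
    linarith
  have hx0A : A ≤ x0 := by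
    have := hx0.1
    rw [div_lt_iff₀ hq] at this
    nlinarith
  have hx0sq : 0 ≤ x0^2 - A^2 := by nlinarith
  refine ⟨?_, ?_, ?_⟩
  · -- factor at x0
    have F2 := mul_le_mul_of_nonneg_right hoD (sq_nonneg x0)
    have F3 : 0 ≤ w * ((A+2)*x0^2 - (A^2+3*A+3)*x0 - (A+1)) := mul_nonneg hw0 hg0
    have F4 : 0 ≤ (A^2+3*A+3) * (v * (x0^2 - A^2)) :=
      mul_nonneg hD.le (mul_nonneg hv hx0sq)
    have F5 : 0 ≤ (A^2+3*A+3) * (x0^2 - A^2) := mul_nonneg hD.le hx0sq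
    have key : 0 ≤ ((m - w*x0 + o*x0^2) - (1+v)*A^2) * (A^2+3*A+3) := by
      linarith [hmD, F2, F3, F4, F5, mul_nonneg hu hD.le]
    by_contra hcon
    push_neg at hcon
    nlinarith [key, mul_pos hD (sub_pos.2 hcon)]
  · -- factor at x1
    have F2 := mul_le_mul_of_nonneg_right hoD (sq_nonneg x1)
    have F3 : 0 ≤ w * ((A+2)*x1^2 - (A^2+3*A+3)*x1 - (A+1) - (A^2+3*A+3)) :=
      mul_nonneg hw0 (by linarith)
    have F4 : 0 ≤ (A^2+3*A+3) * (v * x1^2) :=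
      mul_nonneg hD.le (mul_nonneg hv (sq_nonneg x1))
    have F5 : 0 ≤ (A^2+3*A+3) * x1^2 := mul_nonneg hD.le (sq_nonneg x1)
    have key : 0 ≤ ((m - w*x1 + o*x1^2) - w) * (A^2+3*A+3) := by
      linarith [hmD, F2, F3, F4, F5, mul_nonneg hu hD.le]
    by_contra hcon
    push_neg at hcon
    nlinarith [key, mul_pos hD (sub_pos.2 hcon)]
  · -- factor at x2
    have F2 := mul_le_mul_of_nonneg_right hoD (sq_nonneg x2)
    have F3 : 0 ≤ w * ((A+2)*x2^2 - (A^2+3*A+3)*x2 - (A+1)) := mul_nonneg hw0 hg2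
    have F4 : 0 ≤ (A^2+3*A+3) * (v * x2^2) :=
      mul_nonneg hD.le (mul_nonneg hv (sq_nonneg x2))
    have F5 : 0 ≤ (A^2+3*A+3) * x2^2 := mul_nonneg hD.le (sq_nonneg x2)
    have key : 0 ≤ ((m - w*x2 + o*x2^2) - (1+u)) * (A^2+3*A+3) := by
      linarith [hmD, F2, F3, F4, F5, mul_nonneg hu hD.le]
    by_contra hcon
    push_neg at hcon
    nlinarith [key, mul_pos hD (sub_pos.2 hcon)]

theorem scr_count (N : ℕ) :
    ((((Finset.Icc 1 N ×ˢ Finset.Icc 1 N ×ˢ Finset.Icc 1 N).filter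
        (fun p : ℕ × ℕ × ℕ => p.1 * p.2.1 * p.2.2 ≤ N)).card : ℝ))
      ≤ (N : ℝ) * (1 + Real.log N)^2 := by
  classical
  set I : Finset ℕ := Finset.Icc 1 N with hI
  -- step 1 : card ≤ ∑ d ∑ e, N/(d*e)
  have step1 : ((Finset.Icc 1 N ×ˢ Finset.Icc 1 N ×ˢ Finset.Icc 1 N).filter
        (fun p : ℕ × ℕ × ℕ => p.1 * p.2.1 * p.2.2 ≤ N)).card
      ≤ ∑ d ∈ I, ∑ e ∈ I, N / (d * e) := by
    rw [Finset.card_filter, Finset.sum_product]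
    apply Finset.sum_le_sum
    intro d hd
    rw [Finset.sum_product]
    apply Finset.sum_le_sum
    intro e he
    have hd1 : 1 ≤ d := (Finset.mem_Icc.1 hd).1
    have he1 : 1 ≤ e := (Finset.mem_Icc.1 he).1
    have hde : 0 < d * e := Nat.mul_pos hd1 he1
    calc (∑ c ∈ I, if d * e * c ≤ N then 1 else 0)
        = (I.filter (fun c => d * e * c ≤ N)).card := (Finset.card_filter _ _).symm
      _ ≤ (Finset.Icc 1 (N / (d*e))).card := by
          apply Finset.card_le_card
          intro c hc
          rw [Finset.mem_filter, hI, Finset.mem_Icc] at hc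
          rw [Finset.mem_Icc]
          refine ⟨hc.1.1, ?_⟩
          rw [Nat.le_div_iff_mul_le hde]
          calc c * (d * e) = d * e * c := by ring
            _ ≤ N := hc.2
      _ = N / (d * e) := by rw [Nat.card_Icc, Nat.add_sub_cancel]
  -- step 2: cast and bound by harmonic sums
  have hcast : ((∑ d ∈ I, ∑ e ∈ I, N / (d * e) : ℕ) : ℝ)
      ≤ ∑ d ∈ I, ∑ e ∈ I, (N : ℝ) * (1/(d:ℝ)) * (1/(e:ℝ)) := by
    push_cast
    apply Finset.sum_le_sum
    intro d _
    apply Finset.sum_le_sum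
    intro e _
    calc ((N / (d * e) : ℕ) : ℝ) ≤ (N : ℝ) / ((d * e : ℕ) : ℝ) := Nat.cast_div_le
      _ = (N : ℝ) * (1/(d:ℝ)) * (1/(e:ℝ)) := by push_cast; ring
  have hS : ∑ d ∈ I, ∑ e ∈ I, (N : ℝ) * (1/(d:ℝ)) * (1/(e:ℝ))
      = (N:ℝ) * (∑ d ∈ I, 1/(d:ℝ)) * (∑ e ∈ I, 1/(e:ℝ)) := by
    rw [mul_assoc, Finset.sum_mul_sum, Finset.mul_sum]
    apply Finset.sum_congr rfl
    intro d _
    rw [Finset.mul_sum]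
    apply Finset.sum_congr rfl
    intro e _
    ring
  have hharm : ∑ d ∈ I, 1/(d:ℝ) = ((harmonic N : ℚ) : ℝ) := by
    rw [harmonic_eq_sum_Icc]
    push_cast
    apply Finset.sum_congr rfl
    intro d _
    rw [one_div]
  have hharm_le : ((harmonic N : ℚ) : ℝ) ≤ 1 + Real.log N := harmonic_le_one_add_log N
  have hharm_nonneg : 0 ≤ ((harmonic N : ℚ) : ℝ) := by
    rw [← hharm]
    apply Finset.sum_nonneg
    intro d _
    positivity
  calc ((((Finset.Icc 1 N ×ˢ Finset.Icc 1 N ×ˢ Finset.Icc 1 N).filter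
        (fun p : ℕ × ℕ × ℕ => p.1 * p.2.1 * p.2.2 ≤ N)).card : ℝ))
      ≤ ((∑ d ∈ I, ∑ e ∈ I, N / (d * e) : ℕ) : ℝ) := by exact_mod_cast step1
    _ ≤ ∑ d ∈ I, ∑ e ∈ I, (N : ℝ) * (1/(d:ℝ)) * (1/(e:ℝ)) := hcast
    _ = (N:ℝ) * ((harmonic N : ℚ) : ℝ) * ((harmonic N : ℚ) : ℝ) := by rw [hS, hharm]
    _ ≤ (N:ℝ) * (1 + Real.log N) * (1 + Real.log N) := by
        apply mul_le_mul (mul_le_mul le_rfl hharm_le hharm_nonneg (Nat.cast_nonneg N))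
          hharm_le hharm_nonneg
        positivity
    _ = (N : ℝ) * (1 + Real.log N)^2 := by ring

section NormEq
open Polynomial

open Polynomial

theorem scr_norm_eq (a : ℤ) (ha : 8 ≤ a) (x0 x1 x2 : ℝ)
    (he1 : x0 + x1 + x2 = (a:ℝ))
    (he2 : x0*x1 + x0*x2 + x1*x2 = -((a:ℝ)+3))
    (he3 : x0*x1*x2 = 1)
    (h01 : x0 ≠ x1) (h02 : x0 ≠ x2) (h12 : x1 ≠ x2)
    (K : Type) [Field K] [NumberField K] (ρK : K)
    (hfK : ρK^3 - (a:K)*ρK^2 - ((a:K)+3)*ρK - 1 = 0)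
    (hadj : IntermediateField.adjoin ℚ {ρK} = ⊤)
    (m w o : ℤ) :
    ((Algebra.norm ℚ ((m:K) - (w:K)*ρK + (o:K)*ρK^2) : ℚ) : ℝ)
      = ((m:ℝ) - (w:ℝ)*x0 + (o:ℝ)*x0^2) * ((m:ℝ) - (w:ℝ)*x1 + (o:ℝ)*x1^2)
        * ((m:ℝ) - (w:ℝ)*x2 + (o:ℝ)*x2^2) := by
  classical
  set fq : ℚ[X] := X^3 - C (a:ℚ) * X^2 - C ((a:ℚ)+3) * X - C 1 with hfq
  have hdeg : fq.natDegree = 3 := by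
    rw [hfq]; compute_degree!
  have hmonic : fq.Monic := by
    rw [hfq]; monicity!
  have haev : Polynomial.aeval ρK fq = 0 := by
    rw [hfq]
    simp only [map_sub, map_mul, map_pow, aeval_X, aeval_C, map_one]
    have h1 : (algebraMap ℚ K) ((a:ℚ)) = (a:K) := by push_cast; simp
    have h2 : (algebraMap ℚ K) ((a:ℚ)+3) = (a:K)+3 := by push_cast; simp
    rw [h1, h2]
    linear_combination hfK
  -- irreducibility
  have hirr : Irreducible fq := by
    rw [Polynomial.irreducible_iff_roots_eq_zero_of_degree_le_three (by omega) (by omega)]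
    rw [Multiset.eq_zero_iff_forall_notMem]
    intro z hz
    have hz0 : z^3 - (a:ℚ)*z^2 - ((a:ℚ)+3)*z - 1 = 0 := by
      have h : fq.IsRoot z := (mem_roots hmonic.ne_zero).1 hz
      rw [hfq] at h
      simpa [IsRoot, eval_sub, eval_mul, eval_pow] using h
    set n : ℤ := z.num with hn
    set d : ℤ := (z.den : ℤ) with hd
    have hdpos : 0 < d := by rw [hd]; exact_mod_cast z.den_pos
    have hzq : (z : ℚ) = (n : ℚ) / (d : ℚ) := by
      rw [hn, hd]; push_cast; exact (Rat.num_div_den z).symm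
    have hint : n^3 - a*n^2*d - (a+3)*n*d^2 - d^3 = 0 := by
      have hd0 : (d:ℚ) ≠ 0 := by exact_mod_cast hdpos.ne'
      have : ((n:ℚ))^3 - (a:ℚ)*(n:ℚ)^2*(d:ℚ) - ((a:ℚ)+3)*(n:ℚ)*(d:ℚ)^2 - (d:ℚ)^3 = 0 := by
        have h := hz0
        rw [hzq] at h
        field_simp at h
        have h3 : (d:ℚ)^3 * (((n:ℚ))^3 - (a:ℚ)*(n:ℚ)^2*(d:ℚ) - ((a:ℚ)+3)*(n:ℚ)*(d:ℚ)^2 - (d:ℚ)^3) = 0 := by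
          linear_combination (d:ℚ)^3 * h
        rcases mul_eq_zero.1 h3 with h4 | h4
        · exact absurd h4 (pow_ne_zero 3 hd0)
        · exact h4
      exact_mod_cast this
    -- d ∣ n^3
    have hdvd : d ∣ n^3 := ⟨a*n^2 + (a+3)*n*d + d^2, by linear_combination hint⟩
    have hcop : Nat.Coprime z.num.natAbs z.den := z.reduced
    have hden1 : z.den = 1 := by
      have h1 : z.den ∣ z.num.natAbs ^ 3 := by
        have := Int.natAbs_dvd_natAbs.2 hdvd
        simpa [Int.natAbs_pow, hd, hn] using this
      exact Nat.Coprime.eq_one_of_dvd (hcop.symm.pow_right 3) h1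
    have hzint : (n : ℚ) = z := by
      conv_rhs => rw [← Rat.num_div_den z]
      rw [hden1]; simp [hn]
    have hint2 : n^3 - a*n^2 - (a+3)*n - 1 = 0 := by
      have : d = 1 := by rw [hd, hden1]; simp
      rw [this] at hint; linarith [hint]
    have hunit : IsUnit n := IsUnit.of_mul_eq_one (n^2 - a*n - (a+3)) (by linear_combination hint2)
    rcases Int.isUnit_eq_one_or hunit with h | h <;> rw [h] at hint2 <;> omega
  have hint : IsIntegral ℚ ρK := IsIntegral.of_finite ℚ ρK
  have hmin : minpoly ℚ ρK = fq := (minpoly.eq_of_irreducible_of_monic hirr haev hmonic).symm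
  have hrank : Module.finrank ℚ K = 3 := by
    rw [← IntermediateField.finrank_top', ← hadj, IntermediateField.adjoin.finrank hint,
      hmin, hdeg]
  -- the element and its image under embeddings
  set α : K := (m:K) - (w:K)*ρK + (o:K)*ρK^2 with hα
  have hsep : Algebra.IsSeparable ℚ K := inferInstance
  have hnorm := Algebra.norm_eq_prod_embeddings ℚ ℂ α
  -- the target finset of roots
  set x0c : ℂ := ((x0:ℝ):ℂ)
  set x1c : ℂ := ((x1:ℝ):ℂ)
  set x2c : ℂ := ((x2:ℝ):ℂ)
  have hc01 : x0c ≠ x1c := by simpa [x0c, x1c, Complex.ofReal_inj] using h01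
  have hc02 : x0c ≠ x2c := by simpa [x0c, x2c, Complex.ofReal_inj] using h02
  have hc12 : x1c ≠ x2c := by simpa [x1c, x2c, Complex.ofReal_inj] using h12
  have hce1 : x0c + x1c + x2c = (a:ℂ) := by
    have h := congrArg (fun y : ℝ => (y:ℂ)) he1
    push_cast at h
    linear_combination h
  have hce2 : x0c*x1c + x0c*x2c + x1c*x2c = -((a:ℂ)+3) := by
    have h := congrArg (fun y : ℝ => (y:ℂ)) he2
    push_cast at h
    linear_combination h
  have hce3 : x0c*x1c*x2c = 1 := by
    have h := congrArg (fun y : ℝ => (y:ℂ)) he3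
    push_cast at h
    linear_combination h
  set T : Finset ℂ := {x0c, x1c, x2c} with hT
  have hTcard : T.card = 3 := by
    rw [hT, Finset.card_insert_of_notMem (by simp [hc01, hc02]),
      Finset.card_insert_of_notMem (by simp [hc12]), Finset.card_singleton]
  -- every embedding sends ρK to a root
  have hroot : ∀ σ' : K →ₐ[ℚ] ℂ, σ' ρK ∈ T := by
    intro σ'
    have h0 : (σ' ρK)^3 - (a:ℂ)*(σ' ρK)^2 - ((a:ℂ)+3)*(σ' ρK) - 1 = 0 := by
      have := congrArg σ' hfK
      simpa [map_sub, map_mul, map_pow, map_one, map_intCast, map_ofNat, map_add] using this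
    have hz : (σ' ρK - x0c) * (σ' ρK - x1c) * (σ' ρK - x2c) = 0 := by
      linear_combination h0 - (σ' ρK)^2 * hce1 + (σ' ρK) * hce2 - hce3
    rcases mul_eq_zero.1 hz with hz' | hz'
    · rcases mul_eq_zero.1 hz' with hz'' | hz''
      · rw [hT]; simp [sub_eq_zero.1 hz'']
      · rw [hT]; simp [sub_eq_zero.1 hz'']
    · rw [hT]; simp [sub_eq_zero.1 hz']
  -- the map σ' ↦ σ' ρK is injective
  have hadj' : Algebra.adjoin ℚ ({ρK} : Set K) = ⊤ := by
    have h1 := IntermediateField.adjoin_simple_toSubalgebra_of_isAlgebraic hint.isAlgebraic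
    rw [hadj] at h1
    rw [← h1]
    rfl
  have hinj : Function.Injective (fun σ' : K →ₐ[ℚ] ℂ => σ' ρK) := by
    intro s1 s2 h
    apply AlgHom.ext_of_adjoin_eq_top hadj'
    intro y hy
    rw [Set.mem_singleton_iff.1 hy]
    exact h
  -- image of all embeddings is exactly T
  have hcard : Fintype.card (K →ₐ[ℚ] ℂ) = 3 := by
    rw [AlgHom.card ℚ K ℂ, hrank]
  have himage : Finset.univ.image (fun σ' : K →ₐ[ℚ] ℂ => σ' ρK) = T := by
    apply Finset.eq_of_subset_of_card_le
    · intro z hz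
      rcases Finset.mem_image.1 hz with ⟨σ', _, rfl⟩
      exact hroot σ'
    · rw [Finset.card_image_of_injective _ hinj, Finset.card_univ, hcard, hTcard]
  -- compute each factor
  have hfactor : ∀ σ' : K →ₐ[ℚ] ℂ,
      σ' α = (m:ℂ) - (w:ℂ)*(σ' ρK) + (o:ℂ)*(σ' ρK)^2 := by
    intro σ'
    rw [hα]
    simp [map_sub, map_add, map_mul, map_pow, map_intCast]
  have hprod : ∏ σ' : K →ₐ[ℚ] ℂ, σ' α
      = ((m:ℂ) - (w:ℂ)*x0c + (o:ℂ)*x0c^2) * ((m:ℂ) - (w:ℂ)*x1c + (o:ℂ)*x1c^2)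
        * ((m:ℂ) - (w:ℂ)*x2c + (o:ℂ)*x2c^2) := by
    have h1 : ∏ σ' : K →ₐ[ℚ] ℂ, σ' α
        = ∏ σ' : K →ₐ[ℚ] ℂ, ((m:ℂ) - (w:ℂ)*(σ' ρK) + (o:ℂ)*(σ' ρK)^2) :=
      Finset.prod_congr rfl (fun σ' _ => hfactor σ')
    have h2 : ∏ z ∈ T, ((m:ℂ) - (w:ℂ)*z + (o:ℂ)*z^2)
        = ∏ σ' : K →ₐ[ℚ] ℂ, ((m:ℂ) - (w:ℂ)*(σ' ρK) + (o:ℂ)*(σ' ρK)^2) := by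
      rw [← himage, Finset.prod_image (fun y _ z _ h => hinj h)]
    have h3 : ∏ z ∈ T, ((m:ℂ) - (w:ℂ)*z + (o:ℂ)*z^2)
        = ((m:ℂ) - (w:ℂ)*x0c + (o:ℂ)*x0c^2) * (((m:ℂ) - (w:ℂ)*x1c + (o:ℂ)*x1c^2)
          * ((m:ℂ) - (w:ℂ)*x2c + (o:ℂ)*x2c^2)) := by
      rw [hT, Finset.prod_insert (by simp [hc01, hc02]),
        Finset.prod_insert (by simp [hc12]), Finset.prod_singleton]
    rw [h1, ← h2, h3]; ring
  rw [hprod] at hnorm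
  -- convert to ℝ
  have hfin : ((((Algebra.norm ℚ) α : ℚ) : ℝ) : ℂ)
      = ((((m:ℝ) - (w:ℝ)*x0 + (o:ℝ)*x0^2) * (((m:ℝ)) - (w:ℝ)*x1 + (o:ℝ)*x1^2)
        * ((m:ℝ) - (w:ℝ)*x2 + (o:ℝ)*x2^2) : ℝ) : ℂ) := by
    rw [show ((((Algebra.norm ℚ) α : ℚ) : ℝ) : ℂ) = algebraMap ℚ ℂ ((Algebra.norm ℚ) α) by
      push_cast; norm_cast]
    rw [hnorm]
    push_cast
    ring
  exact_mod_cast hfin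

end NormEq

theorem stmt_14 :
    ∀ r : ℝ, 0 < r →
    ∃ C : ℝ, 0 < C ∧
      ∀ (a : ℤ), 8 ≤ a →
      ∀ (K : Type) [Field K] [NumberField K] (σ : K →+* ℝ) (ρK : K),
        σ ρK = simplestCubicRoot a →
        IntermediateField.adjoin ℚ {ρK} = ⊤ →
        ∀ x : ℝ, 1 ≤ x → x ≤ (a : ℝ) ^ r →
          (Set.ncard {t : ℤ × ℤ × ℤ | 1 ≤ t.2.1 ∧
              ⌊(-((a : ℝ) + 1) * t.2.1) / ((a : ℝ) ^ 2 + 3 * a + 3)⌋ + 2 ≤ t.1 ∧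
              ⌊(((a : ℝ) + 2) * t.2.1) / ((a : ℝ) ^ 2 + 3 * a + 3)⌋ + 2 ≤ t.2.2 ∧
              ((Algebra.norm ℚ ((t.1 : K) - (t.2.1 : K) * ρK + (t.2.2 : K) * ρK ^ 2) : ℚ) : ℝ)
                ≤ x} : ℝ) ≤
            C * (Real.log a) ^ 2 * x / (a : ℝ) ^ 2 := by
  intro r hr
  refine ⟨(r+1)^2, by positivity, ?_⟩
  intro a ha K _ _ σ ρK hσ hadj x hx1' hxr
  have hA : (8:ℝ) ≤ (a:ℝ) := by exact_mod_cast ha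
  set A : ℝ := (a:ℝ) with hAdef
  obtain ⟨x0, x1, x2, hx1, hx2, hx0, he1, he2, he3, hfx0⟩ := scr_roots A hA
  have hq : (0:ℝ) < A + 2 := by linarith
  have hAx : (8:ℝ) ≤ (A^2+3*A+4)/(A+2) := by
    rw [le_div_iff₀ hq]; nlinarith
  have h01 : x0 ≠ x1 := by intro h; linarith [hx0.1, hx1.2, h.le, h.ge, hAx]
  have h02 : x0 ≠ x2 := by intro h; linarith [hx0.1, hx2.2, h.le, h.ge, hAx]
  have h12 : x1 ≠ x2 := by intro h; linarith [hx1.2, hx2.1, h.le, h.ge]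
  -- identify the sSup with x0
  have hsup : simplestCubicRoot a = x0 := by
    apply IsGreatest.csSup_eq
    constructor
    · show x0 ^ 3 - A * x0 ^ 2 - (A + 3) * x0 - 1 = 0
      linarith [hfx0]
    · intro y hy
      have hy' : y^3 - A*y^2 - (A+3)*y - 1 = 0 := hy
      have hfac : (y - x0) * (y - x1) * (y - x2) = 0 := by
        linear_combination hy' - y^2 * he1 + y * he2 - he3
      rcases mul_eq_zero.1 hfac with h | h
      · rcases mul_eq_zero.1 h with h' | h'
        · linarith [sub_eq_zero.1 h']
        · have := sub_eq_zero.1 h'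
          linarith [hx1.2, hx0.1, this.le, this.ge, hAx]
      · have := sub_eq_zero.1 h
        linarith [hx2.2, hx0.1, this.le, this.ge, hAx]
  -- ρK is a root of the cubic in K
  have hfK : ρK^3 - (a:K)*ρK^2 - ((a:K)+3)*ρK - 1 = 0 := by
    apply σ.injective
    have hmap : σ (ρK^3 - (a:K)*ρK^2 - ((a:K)+3)*ρK - 1)
        = (σ ρK)^3 - A*(σ ρK)^2 - (A+3)*(σ ρK) - 1 := by
      simp [map_sub, map_mul, map_pow, map_intCast, map_one, map_add, map_ofNat, hAdef]
    rw [hmap, hσ, hsup, map_zero]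
    linarith [hfx0]
  obtain ⟨hg0, hg1, hg2⟩ := scr_g_bounds A x0 x1 x2 hA hx1 hx2 hx0 he1 he2 he3
  -- the counting set
  set St : Set (ℤ × ℤ × ℤ) := {t : ℤ × ℤ × ℤ | 1 ≤ t.2.1 ∧
      ⌊(-((a : ℝ) + 1) * t.2.1) / ((a : ℝ) ^ 2 + 3 * a + 3)⌋ + 2 ≤ t.1 ∧
      ⌊(((a : ℝ) + 2) * t.2.1) / ((a : ℝ) ^ 2 + 3 * a + 3)⌋ + 2 ≤ t.2.2 ∧
      ((Algebra.norm ℚ ((t.1 : K) - (t.2.1 : K) * ρK + (t.2.2 : K) * ρK ^ 2) : ℚ) : ℝ)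
        ≤ x} with hSt
  have hA2pos : (0:ℝ) < A^2 := by positivity
  set T : ℝ := x / A^2 with hTdef
  have hT0 : 0 ≤ T := by
    rw [hTdef]
    apply div_nonneg (by linarith) (by positivity)
  set N : ℕ := ⌊T⌋₊ with hN
  -- the injection
  set j : ℤ × ℤ × ℤ → ℕ × ℕ × ℕ := fun t =>
    ((t.1 - ⌊(-(A + 1) * (t.2.1:ℝ)) / (A ^ 2 + 3 * A + 3)⌋ - 1).toNat,
     t.2.1.toNat,
     (t.2.2 - ⌊((A + 2) * (t.2.1:ℝ)) / (A ^ 2 + 3 * A + 3)⌋ - 1).toNat) with hj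
  -- key facts for members of St
  have hkey : ∀ t ∈ St, ∃ u v : ℤ,
      u = t.1 - ⌊(-(A + 1) * (t.2.1:ℝ)) / (A ^ 2 + 3 * A + 3)⌋ - 2 ∧
      v = t.2.2 - ⌊((A + 2) * (t.2.1:ℝ)) / (A ^ 2 + 3 * A + 3)⌋ - 2 ∧
      0 ≤ u ∧ 0 ≤ v ∧ 1 ≤ t.2.1 ∧
      (((u + 1) * t.2.1 * (v + 1) : ℤ) : ℝ) ≤ T := by
    intro t ht
    obtain ⟨htw, htm, hto, htn⟩ := ht
    set m : ℤ := t.1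
    set w : ℤ := t.2.1
    set o : ℤ := t.2.2
    have hconv1 : ((-((a : ℝ) + 1) * w) / ((a : ℝ) ^ 2 + 3 * a + 3))
        = (-(A + 1) * (w:ℝ)) / (A ^ 2 + 3 * A + 3) := by rw [hAdef]
    have hconv2 : ((((a : ℝ) + 2) * w) / ((a : ℝ) ^ 2 + 3 * a + 3))
        = ((A + 2) * (w:ℝ)) / (A ^ 2 + 3 * A + 3) := by rw [hAdef]
    rw [hconv1] at htm
    rw [hconv2] at hto
    obtain ⟨u, hu⟩ : ∃ u : ℤ, u = m - ⌊(-(A + 1) * (w:ℝ)) / (A ^ 2 + 3 * A + 3)⌋ - 2 := ⟨_, rfl⟩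
    obtain ⟨v, hv⟩ : ∃ v : ℤ, v = o - ⌊((A + 2) * (w:ℝ)) / (A ^ 2 + 3 * A + 3)⌋ - 2 := ⟨_, rfl⟩
    have hu0 : 0 ≤ u := by omega
    have hv0 : 0 ≤ v := by omega
    -- real versions
    have hmr : (-(A+1)*(w:ℝ))/(A^2+3*A+3) + 1 + (u:ℝ) ≤ (m:ℝ) := by
      have hfl := Int.lt_floor_add_one ((-(A + 1) * (w:ℝ)) / (A ^ 2 + 3 * A + 3))
      have : (m:ℝ) = (u:ℝ) + (⌊(-(A + 1) * (w:ℝ)) / (A ^ 2 + 3 * A + 3)⌋ : ℝ) + 2 := by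
        rw [hu]; push_cast; ring
      rw [this]; linarith
    have hor : ((A+2)*(w:ℝ))/(A^2+3*A+3) + 1 + (v:ℝ) ≤ (o:ℝ) := by
      have hfl := Int.lt_floor_add_one (((A + 2) * (w:ℝ)) / (A ^ 2 + 3 * A + 3))
      have : (o:ℝ) = (v:ℝ) + (⌊((A + 2) * (w:ℝ)) / (A ^ 2 + 3 * A + 3)⌋ : ℝ) + 2 := by
        rw [hv]; push_cast; ring
      rw [this]; linarith
    have hwr : (1:ℝ) ≤ (w:ℝ) := by exact_mod_cast htw
    obtain ⟨F0, F1, F2⟩ := scr_factor_bounds A x0 x1 x2 (m:ℝ) (w:ℝ) (o:ℝ) (u:ℝ) (v:ℝ)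
      hA hx1 hx2 hx0 hg0 hg1 hg2 hwr (by exact_mod_cast hu0) (by exact_mod_cast hv0) hmr hor
    -- norm identity
    have hnorm := scr_norm_eq a ha x0 x1 x2 he1 he2 he3 h01 h02 h12 K ρK hfK hadj m w o
    rw [hnorm] at htn
    -- chain of products
    have hP0 : (0:ℝ) < (1+(v:ℝ))*A^2 := by
      have h' : (0:ℝ) ≤ (v:ℝ) := by exact_mod_cast hv0
      have h'' : (0:ℝ) < 1 + (v:ℝ) := by linarith
      exact mul_pos h'' hA2pos
    have hP1 : (0:ℝ) < (w:ℝ) := by linarith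
    have hP2 : (0:ℝ) < 1+(u:ℝ) := by
      have : (0:ℝ) ≤ (u:ℝ) := by exact_mod_cast hu0
      linarith
    have hstep : ((1+(v:ℝ))*A^2) * (w:ℝ) * (1+(u:ℝ))
        ≤ ((m:ℝ) - (w:ℝ)*x0 + (o:ℝ)*x0^2) * ((m:ℝ) - (w:ℝ)*x1 + (o:ℝ)*x1^2)
          * ((m:ℝ) - (w:ℝ)*x2 + (o:ℝ)*x2^2) := by
      apply mul_le_mul _ F2 hP2.le (mul_nonneg (le_trans hP0.le F0) (le_trans hP1.le F1))
      apply mul_le_mul F0 F1 hP1.le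
      linarith [F0, hP0]
    refine ⟨u, v, hu, hv, hu0, hv0, htw, ?_⟩
    have hfin : ((u:ℝ)+1)*(w:ℝ)*((v:ℝ)+1) ≤ T := by
      rw [hTdef, le_div_iff₀ hA2pos]
      nlinarith [hstep, htn]
    have hcast : (((u + 1) * w * (v + 1) : ℤ) : ℝ) = ((u:ℝ)+1)*(w:ℝ)*((v:ℝ)+1) := by
      push_cast; ring
    rw [hcast]
    exact hfin
  -- the finite target set
  set H : Finset (ℕ × ℕ × ℕ) := (Finset.Icc 1 N ×ˢ Finset.Icc 1 N ×ˢ Finset.Icc 1 N).filter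
      (fun p => p.1 * p.2.1 * p.2.2 ≤ N) with hH
  have hsub : j '' St ⊆ ↑H := by
    rintro p ⟨t, ht, rfl⟩
    obtain ⟨u, v, hu, hv, hu0, hv0, htw, k4⟩ := hkey t ht
    have e1 : t.1 - ⌊(-(A + 1) * (t.2.1:ℝ)) / (A ^ 2 + 3 * A + 3)⌋ - 1 = u + 1 := by omega
    have e3 : t.2.2 - ⌊((A + 2) * (t.2.1:ℝ)) / (A ^ 2 + 3 * A + 3)⌋ - 1 = v + 1 := by omega
    have hjt : j t = ((u+1).toNat, t.2.1.toNat, (v+1).toNat) := by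
      rw [hj]
      simp only [e1, e3]
    rw [hjt]
    have hprod : (u+1).toNat * t.2.1.toNat * (v+1).toNat ≤ N := by
      apply Nat.le_floor
      have hcast2 : (((u+1).toNat * t.2.1.toNat * (v+1).toNat : ℕ) : ℝ)
          = (((u + 1) * t.2.1 * (v + 1) : ℤ) : ℝ) := by
        have n1 : (((u+1).toNat : ℕ) : ℤ) = u+1 := Int.toNat_of_nonneg (by omega)
        have n2 : ((t.2.1.toNat : ℕ) : ℤ) = t.2.1 := Int.toNat_of_nonneg (by omega)
        have n3 : (((v+1).toNat : ℕ) : ℤ) = v+1 := Int.toNat_of_nonneg (by omega)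
        rw [← Int.cast_natCast]
        congr 1
        rw [Nat.cast_mul, Nat.cast_mul, n1, n2, n3]
      rw [hcast2]
      exact k4
    have hdn : (1:ℕ) ≤ (u+1).toNat := by omega
    have hwn : (1:ℕ) ≤ t.2.1.toNat := by omega
    have hcn : (1:ℕ) ≤ (v+1).toNat := by omega
    have hd_le : (u+1).toNat ≤ N := by
      calc (u+1).toNat = (u+1).toNat * 1 * 1 := by ring
        _ ≤ (u+1).toNat * t.2.1.toNat * (v+1).toNat := by gcongr <;> omega
        _ ≤ N := hprod
    have hw_le : t.2.1.toNat ≤ N := by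
      calc t.2.1.toNat = 1 * t.2.1.toNat * 1 := by ring
        _ ≤ (u+1).toNat * t.2.1.toNat * (v+1).toNat := by gcongr <;> omega
        _ ≤ N := hprod
    have hc_le : (v+1).toNat ≤ N := by
      calc (v+1).toNat = 1 * 1 * (v+1).toNat := by ring
        _ ≤ (u+1).toNat * t.2.1.toNat * (v+1).toNat := by gcongr <;> omega
        _ ≤ N := hprod
    rw [hH, Finset.mem_coe, Finset.mem_filter, Finset.mem_product, Finset.mem_product]
    exact ⟨⟨Finset.mem_Icc.2 ⟨hdn, hd_le⟩, Finset.mem_Icc.2 ⟨hwn, hw_le⟩,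
      Finset.mem_Icc.2 ⟨hcn, hc_le⟩⟩, hprod⟩
  have hinj : Set.InjOn j St := by
    rintro t ht t' ht' heq
    obtain ⟨u, v, hu, hv, hu0, hv0, htw, _⟩ := hkey t ht
    obtain ⟨u', v', hu', hv', hu0', hv0', htw', _⟩ := hkey t' ht'
    have e1 : t.1 - ⌊(-(A + 1) * (t.2.1:ℝ)) / (A ^ 2 + 3 * A + 3)⌋ - 1 = u + 1 := by omega
    have e3 : t.2.2 - ⌊((A + 2) * (t.2.1:ℝ)) / (A ^ 2 + 3 * A + 3)⌋ - 1 = v + 1 := by omega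
    have e1' : t'.1 - ⌊(-(A + 1) * (t'.2.1:ℝ)) / (A ^ 2 + 3 * A + 3)⌋ - 1 = u' + 1 := by omega
    have e3' : t'.2.2 - ⌊((A + 2) * (t'.2.1:ℝ)) / (A ^ 2 + 3 * A + 3)⌋ - 1 = v' + 1 := by omega
    have hjt : j t = ((u+1).toNat, t.2.1.toNat, (v+1).toNat) := by
      rw [hj]; simp only [e1, e3]
    have hjt' : j t' = ((u'+1).toNat, t'.2.1.toNat, (v'+1).toNat) := by
      rw [hj]; simp only [e1', e3']
    rw [hjt, hjt'] at heq
    have c1 : (u+1).toNat = (u'+1).toNat := congrArg (fun p => p.1) heq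
    have c2 : t.2.1.toNat = t'.2.1.toNat := congrArg (fun p => p.2.1) heq
    have c3 : (v+1).toNat = (v'+1).toNat := congrArg (fun p => p.2.2) heq
    have ew : t.2.1 = t'.2.1 := by omega
    have euu : u = u' := by omega
    have evv : v = v' := by omega
    rw [ew] at hu hv
    have em : t.1 = t'.1 := by omega
    have eo : t.2.2 = t'.2.2 := by omega
    exact Prod.ext em (Prod.ext ew eo)
  -- cardinality comparison
  have hfinH : (↑H : Set (ℕ × ℕ × ℕ)).Finite := H.finite_toSet
  have h1 : St.ncard = (j '' St).ncard := (Set.ncard_image_of_injOn hinj).symm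
  have h2 : (j '' St).ncard ≤ H.card := by
    rw [← Set.ncard_coe_finset H]
    exact Set.ncard_le_ncard hsub hfinH
  have hcount := scr_count N
  -- final numeric chain
  have hlogA : 2 ≤ Real.log A := by
    have h8 : Real.log 8 ≤ Real.log A := by
      apply Real.log_le_log (by norm_num) hA
    have h8' : Real.log 8 = 3 * Real.log 2 := by
      rw [show (8:ℝ) = 2^3 by norm_num, Real.log_pow]; push_cast; ring
    nlinarith [Real.log_two_gt_d9]
  have hfinal : (N : ℝ) * (1 + Real.log N)^2 ≤ (r+1)^2 * (Real.log A)^2 * x / A^2 := by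
    rcases Nat.eq_zero_or_pos N with h0 | hNpos
    · rw [h0]
      simp only [Nat.cast_zero, zero_mul]
      have hx0 : (0:ℝ) < x := by linarith
      positivity
    · have hN1 : (1:ℝ) ≤ (N:ℝ) := by exact_mod_cast hNpos
      have hNT : (N:ℝ) ≤ T := Nat.floor_le hT0
      have hT1 : (1:ℝ) ≤ T := le_trans hN1 hNT
      have hTA : T ≤ A ^ r := by
        rw [hTdef]
        calc x / A^2 ≤ x / 1 := by
              apply div_le_div_of_nonneg_left (by linarith) (by norm_num) (by nlinarith)
          _ = x := div_one x
          _ ≤ A ^ r := hxr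
      have hlogN : Real.log (N:ℝ) ≤ r * Real.log A := by
        calc Real.log (N:ℝ) ≤ Real.log T := Real.log_le_log (by linarith) hNT
          _ ≤ Real.log (A ^ r) := Real.log_le_log (by linarith) hTA
          _ = r * Real.log A := Real.log_rpow (by linarith) r
      have h1N : 0 ≤ 1 + Real.log (N:ℝ) := by
        have := Real.log_nonneg hN1
        linarith
      have hbound : 1 + Real.log (N:ℝ) ≤ (1/2 + r) * Real.log A := by nlinarith
      calc (N:ℝ) * (1 + Real.log N)^2 ≤ T * ((1/2+r) * Real.log A)^2 := by
            apply mul_le_mul hNT (by nlinarith) (by positivity) hT0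
        _ ≤ T * ((r+1)^2 * (Real.log A)^2) := by
            apply mul_le_mul_of_nonneg_left _ hT0
            nlinarith [sq_nonneg (Real.log A)]
        _ = (r+1)^2 * (Real.log A)^2 * T := by ring
        _ = (r+1)^2 * (Real.log A)^2 * x / A^2 := by rw [hTdef]; ring
  calc (St.ncard : ℝ) ≤ (H.card : ℝ) := by
        rw [h1]
        exact_mod_cast h2
    _ ≤ (N : ℝ) * (1 + Real.log N)^2 := hcount
    _ ≤ (r+1)^2 * (Real.log A)^2 * x / A^2 := hfinal
end
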